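/- arXiv:1605.06615 — 6 statements merged into one kernel-verified Lean document; each statement's English description precedes it below -/
import Mathlib

section
/- Let r ≥ 2, h = ⌈log₂ r⌉, and let c be the completely balanced alphabetic code on r characters defined by: c(i) is the h-bit big-endian binary representation of i if i < 2r − 2^h, and otherwise the (h−1)-bit big-endian binary representation of i − r + 2^{h−1}. Then for every i < r and every h-bit string s having c(i) as a prefix, letting j be the value of s read as a big-endian binary number: if j < 2r − 2^h then i = j, and otherwise i = ⌊j/2⌋ + r − 2^{h−1}. -/
/-- `bitsBE h i` is the `h`-bit big-endian binary representation of `i`. -/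
def bitsBE : ℕ → ℕ → List Bool
  | 0, _ => []
  | h + 1, i => bitsBE h (i / 2) ++ [i % 2 == 1]

/-- The value of a bit string read as a big-endian binary number. -/
def valBE (l : List Bool) : ℕ :=
  l.foldl (fun a b => 2 * a + (if b then 1 else 0)) 0

/-- The completely balanced alphabetic code on `r` characters, deeper leaves
leftmost, where `h = ⌈log₂ r⌉`. -/
def balancedCode (r : ℕ) (i : Fin r) : List Bool :=
  if (i : ℕ) < 2 * r - 2 ^ Nat.clog 2 r then
    bitsBE (Nat.clog 2 r) i
  else
    bitsBE (Nat.clog 2 r - 1) ((i : ℕ) + 2 ^ (Nat.clog 2 r - 1) - r)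

theorem length_bitsBE (h i : ℕ) : (bitsBE h i).length = h := by
  induction h generalizing i with
  | zero => rfl
  | succ h ih => simp [bitsBE, ih]

theorem valBE_append_one (l : List Bool) (b : Bool) :
    valBE (l ++ [b]) = 2 * valBE l + (if b then 1 else 0) := by
  simp [valBE, List.foldl_append]

theorem valBE_bitsBE (h i : ℕ) (hi : i < 2 ^ h) : valBE (bitsBE h i) = i := by
  induction h generalizing i with
  | zero => simpa [bitsBE, valBE] using (Nat.lt_one_iff.mp hi).symm
  | succ h ih =>
    have hp : 2 ^ (h + 1) = 2 * 2 ^ h := by ring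
    have h2 : i / 2 < 2 ^ h := by omega
    rw [bitsBE, valBE_append_one, ih _ h2]
    rcases Nat.mod_two_eq_zero_or_one i with h0 | h0 <;> simp [h0] <;> omega

/-- Constant-time decoding in a completely balanced subtree: reading any
`h`-bit string `s` that extends the codeword of `i` as a big-endian number `j`,
we recover `i` as `j` if `j < 2r - 2^h` and as `⌊j/2⌋ + r - 2^(h-1)`
otherwise. -/
theorem balancedCode_decode (r : ℕ) (hr : 2 ≤ r) (i : Fin r)
    (s : List Bool) (hs : s.length = Nat.clog 2 r)
    (hpre : balancedCode r i <+: s) :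
    (valBE s < 2 * r - 2 ^ Nat.clog 2 r → (i : ℕ) = valBE s) ∧
    (¬ valBE s < 2 * r - 2 ^ Nat.clog 2 r →
      (i : ℕ) = valBE s / 2 + r - 2 ^ (Nat.clog 2 r - 1)) := by
  set h := Nat.clog 2 r with hh
  have hh1 : 1 ≤ h := Nat.clog_pos (by norm_num) hr
  have hle : r ≤ 2 ^ h := Nat.le_pow_clog (by norm_num) r
  have hlt : 2 ^ (h - 1) < r := Nat.pow_pred_clog_lt_self (by norm_num) hr
  have hpow : 2 ^ h = 2 * 2 ^ (h - 1) := by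
    have he : h - 1 + 1 = h := by omega
    calc 2 ^ h = 2 ^ (h - 1 + 1) := by rw [he]
    _ = 2 * 2 ^ (h - 1) := by ring
  have hi : (i : ℕ) < r := i.isLt
  unfold balancedCode at hpre
  by_cases hc : (i : ℕ) < 2 * r - 2 ^ h
  · rw [if_pos hc] at hpre
    obtain ⟨t, ht⟩ := hpre
    have hlen : (bitsBE h (i:ℕ)).length + t.length = s.length := by
      rw [← ht, List.length_append]
    rw [length_bitsBE, hs] at hlen
    have ht0 : t = [] := List.eq_nil_of_length_eq_zero (by omega)
    subst ht0
    rw [List.append_nil] at ht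
    have hv : valBE s = (i : ℕ) := by
      rw [← ht]; exact valBE_bitsBE h i (by omega)
    constructor <;> intro hj <;> omega
  · rw [if_neg hc] at hpre
    obtain ⟨t, ht⟩ := hpre
    have hlen : (bitsBE (h-1) ((i:ℕ) + 2 ^ (h-1) - r)).length + t.length = s.length := by
      rw [← ht, List.length_append]
    rw [length_bitsBE, hs] at hlen
    obtain ⟨b, rfl⟩ := List.length_eq_one_iff.mp (show t.length = 1 by omega)
    have hk : (i : ℕ) + 2 ^ (h - 1) - r < 2 ^ (h - 1) := by omega
    have hv : valBE s = 2 * ((i : ℕ) + 2 ^ (h - 1) - r) + (if b then 1 else 0) := by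
      rw [← ht, valBE_append_one, valBE_bitsBE _ _ hk]
    cases b <;> simp at hv <;> constructor <;> intro hj <;> omega
end

section
/- Let c be an alphabetic prefix-free code on σ ≥ 1 characters and let D ≥ 0 be an integer. Then there exists an alphabetic prefix-free code c' on the same σ characters such that: (a) c'(i) = c(i) whenever |c(i)| ≤ D; (b) whenever |c(i)| > D, the codeword c'(i) has the same length-D prefix as c(i) and |c'(i)| ≤ max_j |c(j)|; and (c) for every i with |c(i)| > D, if k is the number of indices j such that c(j) shares the length-D prefix of c(i), then |c'(i)| equals D + ⌈log₂ k⌉ or D + ⌈log₂ k⌉ − 1, with exactly 2k − 2^{⌈log₂ k⌉} characters of that prefix class receiving the larger length. -/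
/-- Lexicographic strict order on bit strings: `0 < 1`, a proper prefix is
smaller than its extensions. -/
def lexLT (x y : List Bool) : Prop := List.Lex (· < ·) x y

/-- A set of bit strings is prefix-free if no element is a proper prefix of
another. -/
def PrefixFree (C : Set (List Bool)) : Prop :=
  ∀ u ∈ C, ∀ v ∈ C, u <+: v → u = v

/-- An alphabetic prefix-free code on `σ` characters. -/
def AlphabeticCode (σ : ℕ) (c : Fin σ → List Bool) : Prop :=
  PrefixFree (Set.range c) ∧ ∀ i j : Fin σ, i < j → lexLT (c i) (c j)



/-- Fixed-width big-endian binary representation. -/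
def bitsM : ℕ → ℕ → List Bool
  | 0, _ => []
  | n+1, v => v.testBit n :: bitsM n v

lemma bitsM_length (n v : ℕ) : (bitsM n v).length = n := by
  induction n generalizing v with
  | zero => rfl
  | succ n ih => simp [bitsM, ih]

lemma bitsM_mod (n v : ℕ) : bitsM n (v % 2^n) = bitsM n v := by
  induction n generalizing v with
  | zero => rfl
  | succ n ih =>
    have h1 : v % 2^(n+1) % 2^n = v % 2^n := Nat.mod_mod_of_dvd _ (pow_dvd_pow 2 n.le_succ)
    rw [bitsM, bitsM, Nat.testBit_mod_two_pow]
    congr 1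
    · simp
    · rw [← ih (v % 2^(n+1)), h1, ih]

lemma testBit_true_of {n x : ℕ} (h1 : 2^n ≤ x) (h2 : x < 2^(n+1)) : x.testBit n = true := by
  rw [Nat.testBit_eq_decide_div_mod_eq]
  have hp : 2^(n+1) = 2 * 2^n := by ring
  have : x / 2^n = 1 := Nat.div_eq_of_lt_le (by omega) (by omega)
  simp [this]

lemma bitsM_lt {n a b : ℕ} (hab : a < b) (hb : b < 2^n) :
    List.Lex (· < ·) (bitsM n a) (bitsM n b) := by
  induction n generalizing a b with
  | zero => simp at hb; omega
  | succ n ih =>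
    have hpow : 2^(n+1) = 2 * 2^n := by ring
    by_cases ha2 : a < 2^n
    · by_cases hb2 : b < 2^n
      · rw [bitsM, bitsM, Nat.testBit_lt_two_pow ha2, Nat.testBit_lt_two_pow hb2]
        exact List.Lex.cons (ih hab hb2)
      · rw [bitsM, bitsM, Nat.testBit_lt_two_pow ha2, testBit_true_of (by omega) hb]
        exact List.Lex.rel Bool.false_lt_true
    · have h1 : a.testBit n = true := testBit_true_of (by omega) (by omega)
      have h2 : b.testBit n = true := testBit_true_of (by omega) hb
      rw [bitsM, bitsM, h1, h2]
      refine List.Lex.cons ?_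
      rw [← bitsM_mod n a, ← bitsM_mod n b]
      have ha' : a % 2^n = a - 2^n := by
        rw [Nat.mod_eq_sub_mod (by omega), Nat.mod_eq_of_lt (by omega)]
      have hb' : b % 2^n = b - 2^n := by
        rw [Nat.mod_eq_sub_mod (by omega), Nat.mod_eq_of_lt (by omega)]
      rw [ha', hb']; exact ih (by omega) (by omega)

lemma lexLT_irrefl' (x : List Bool) : ¬ List.Lex (· < ·) x x := by
  induction x with
  | nil => intro h; cases h
  | cons a l ih =>
    intro h
    cases h with
    | rel h => exact absurd h (lt_irrefl a)
    | cons h => exact ih h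

lemma bitsM_inj {n a b : ℕ} (ha : a < 2^n) (hb : b < 2^n) (h : bitsM n a = bitsM n b) :
    a = b := by
  rcases lt_trichotomy a b with h1 | h1 | h1
  · exact absurd (h ▸ bitsM_lt h1 hb) (lexLT_irrefl' _)
  · exact h1
  · exact absurd (h ▸ bitsM_lt h1 ha) (lexLT_irrefl' _)

lemma bitsM_succ (n v : ℕ) : bitsM (n+1) v = bitsM n (v/2) ++ [v.testBit 0] := by
  induction n generalizing v with
  | zero => rfl
  | succ n ih =>
    rw [show bitsM (n+2) v = v.testBit (n+1) :: bitsM (n+1) v from rfl, ih]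
    rw [show bitsM (n+1) (v/2) = (v/2).testBit n :: bitsM n (v/2) from rfl]
    rw [Nat.testBit_succ]
    rfl

lemma lex_append_same (u : List Bool) {x y : List Bool} (h : List.Lex (· < ·) x y) :
    List.Lex (· < ·) (u ++ x) (u ++ y) := by
  induction u with
  | nil => exact h
  | cons a l ih => exact List.Lex.cons ih

lemma lex_append_left {x y : List Bool} (h : List.Lex (· < ·) x y) :
    ∀ z, x.length = y.length → List.Lex (· < ·) (x ++ z) y := by
  induction h with
  | nil => intro z hl; simp at hl
  | @rel a l₁ b l₂ hr => intro z hl; exact List.Lex.rel hr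
  | @cons a l₁ l₂ h ih =>
    intro z hl
    exact List.Lex.cons (ih z (by simpa using hl))

lemma lex_master {x y : List Bool} (h : List.Lex (· < ·) x y) :
    ∀ n, ¬ x <+: y → x.take n ≠ y.take n →
      ∀ z w, List.Lex (· < ·) (x.take n ++ z) (y.take n ++ w) := by
  induction h with
  | nil => intro n hp _ _ _; exact absurd List.nil_prefix hp
  | @rel a l₁ b l₂ hr =>
    intro n hp ht z w
    cases n with
    | zero => exact absurd rfl ht
    | succ n =>
      simp only [List.take_succ_cons, List.cons_append]
      exact List.Lex.rel hr
  | @cons a l₁ l₂ h ih =>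
    intro n hp ht z w
    cases n with
    | zero => exact absurd rfl ht
    | succ n =>
      simp only [List.take_succ_cons, List.cons_append]
      refine List.Lex.cons (ih n (fun hpre => hp (List.cons_prefix_cons.mpr ⟨rfl, hpre⟩))
        (fun he => ht (by rw [List.take_succ_cons, List.take_succ_cons, he])) z w)

section rnk
variable {α : Type*} [LinearOrder α]

/-- rank of `j` inside finset `s`. -/
def rk (s : Finset α) (j : α) : ℕ := (s.filter fun x => x < j).card

lemma rk_lt_rk {s : Finset α} {i j : α} (hi : i ∈ s) (hij : i < j) : rk s i < rk s j := by
  apply Finset.card_lt_card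
  rw [Finset.ssubset_def]
  constructor
  · intro x hx
    simp only [Finset.mem_filter] at *
    exact ⟨hx.1, lt_trans hx.2 hij⟩
  · intro hall
    have := hall (Finset.mem_filter.mpr ⟨hi, hij⟩)
    exact absurd (Finset.mem_filter.mp this).2 (lt_irrefl i)

lemma rk_lt_card {s : Finset α} {j : α} (hj : j ∈ s) : rk s j < s.card := by
  apply Finset.card_lt_card
  rw [Finset.ssubset_def]
  refine ⟨Finset.filter_subset _ _, fun hall => ?_⟩
  exact absurd (Finset.mem_filter.mp (hall hj)).2 (lt_irrefl j)

lemma rk_injOn (s : Finset α) : Set.InjOn (rk s) s := by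
  intro i hi j hj he
  rcases lt_trichotomy i j with h1 | h1 | h1
  · exact absurd he (Nat.ne_of_lt (rk_lt_rk hi h1))
  · exact h1
  · exact absurd he.symm (Nat.ne_of_lt (rk_lt_rk hj h1))

lemma rk_image (s : Finset α) [DecidableEq α] : s.image (rk s) = Finset.range s.card := by
  apply Finset.eq_of_subset_of_card_le
  · intro x hx
    obtain ⟨j, hj, rfl⟩ := Finset.mem_image.mp hx
    exact Finset.mem_range.mpr (rk_lt_card hj)
  · rw [Finset.card_range, Finset.card_image_of_injOn (rk_injOn s)]

lemma rk_count {s : Finset α} [DecidableEq α] {t : ℕ} (ht : t ≤ s.card) :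
    (s.filter fun j => rk s j < t).card = t := by
  have hinj : Set.InjOn (rk s) (s.filter fun j => rk s j < t) :=
    (rk_injOn s).mono (by exact_mod_cast Finset.filter_subset _ s)
  calc (s.filter fun j => rk s j < t).card
      = ((s.filter fun j => rk s j < t).image (rk s)).card :=
        (Finset.card_image_of_injOn hinj).symm
    _ = ((s.image (rk s)).filter (fun x => x < t)).card := by rw [Finset.filter_image]
    _ = ((Finset.range s.card).filter (fun x => x < t)).card := by rw [rk_image]
    _ = t := by
        have : (Finset.range s.card).filter (fun x => x < t) = Finset.range t := by
          ext a
          simp only [Finset.mem_filter, Finset.mem_range]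
          omega
        rw [this, Finset.card_range]

end rnk

lemma kraft {α : Type*} [DecidableEq α] (s : Finset α) (g : α → List Bool) (N : ℕ)
    (hlen : ∀ j ∈ s, (g j).length ≤ N)
    (hpf : ∀ j ∈ s, ∀ j' ∈ s, g j <+: g j' → j = j') :
    s.card ≤ 2 ^ N := by
  classical
  set pad : α → List Bool := fun j => g j ++ List.replicate (N - (g j).length) false with hpad
  have hplen : ∀ j ∈ s, (pad j).length = N := by
    intro j hj
    simp only [hpad, List.length_append, List.length_replicate]
    have := hlen j hj
    omega
  have hpinj : ∀ j ∈ s, ∀ j' ∈ s, pad j = pad j' → j = j' := by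
    have main : ∀ j ∈ s, ∀ j' ∈ s, (g j).length ≤ (g j').length → pad j = pad j' → j = j' := by
      intro j hj j' hj' hle he
      have h1 : g j <+: pad j' := he ▸ List.prefix_append _ _
      have h2 : g j <+: g j' :=
        List.prefix_of_prefix_length_le h1 (List.prefix_append _ _) hle
      exact hpf j hj j' hj' h2
    intro j hj j' hj' he
    rcases le_total (g j).length (g j').length with h | h
    · exact main j hj j' hj' h he
    · exact (main j' hj' j hj h he.symm).symm
  have hcard : s.card ≤ Fintype.card (Fin N → Bool) := by
    apply Finset.card_le_card_of_injOn
      (fun j => (fun t : Fin N => (pad j).getD t.val false))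
    · intro a _; exact Finset.mem_univ _
    · intro j hj j' hj' he
      simp only [Finset.mem_coe] at hj hj'
      apply hpinj j hj j' hj'
      apply List.ext_getElem (by rw [hplen j hj, hplen j' hj'])
      intro n h₁ h₂
      have hn : n < N := by rw [← hplen j hj]; exact h₁
      have h3 : (pad j).getD n false = (pad j').getD n false := congrFun he ⟨n, hn⟩
      rw [List.getD_eq_getElem _ _ h₁, List.getD_eq_getElem _ _ h₂] at h3
      exact h3
  simpa using hcard

/-- Balanced alphabetic code on `k` symbols: `2k - 2^⌈log₂ k⌉` codewords of
length `⌈log₂ k⌉` followed by `2^⌈log₂ k⌉ - k` codewords of length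
`⌈log₂ k⌉ - 1`. -/
def bal (k m : ℕ) : List Bool :=
  if m < 2*k - 2^(Nat.clog 2 k) then bitsM (Nat.clog 2 k) m
  else bitsM (Nat.clog 2 k - 1) (m + 2^(Nat.clog 2 k - 1) - k)

lemma bal_length (k m : ℕ) :
    (bal k m).length =
      if m < 2*k - 2^(Nat.clog 2 k) then Nat.clog 2 k else Nat.clog 2 k - 1 := by
  unfold bal; split <;> simp [bitsM_length]

lemma bal_length_le (k m : ℕ) : (bal k m).length ≤ Nat.clog 2 k := by
  rw [bal_length]; split <;> omega

lemma clog_facts {k : ℕ} (hk : 2 ≤ k) :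
    2^(Nat.clog 2 k - 1) < k ∧ k ≤ 2^(Nat.clog 2 k) ∧ 1 ≤ Nat.clog 2 k ∧
    2^(Nat.clog 2 k) = 2 * 2^(Nat.clog 2 k - 1) := by
  have h1 := Nat.pow_pred_clog_lt_self (b := 2) one_lt_two (x := k) hk
  have h2 := Nat.le_pow_clog one_lt_two k
  have h3 := Nat.clog_pos one_lt_two hk
  refine ⟨h1, h2, h3, ?_⟩
  conv_lhs => rw [show Nat.clog 2 k = (Nat.clog 2 k - 1) + 1 by omega]
  rw [pow_succ']

lemma bal_k2 {k m : ℕ} (hm : m < k) (h : ¬ m < 2*k - 2^(Nat.clog 2 k)) : 2 ≤ k := by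
  rcases Nat.lt_or_ge k 2 with hlt | hge
  · exfalso
    have hk1 : k = 1 := by omega
    rw [hk1, Nat.clog_one_right, pow_zero] at h
    omega
  · exact hge

lemma bal_length_iff {k m : ℕ} (hm : m < k) :
    (bal k m).length = Nat.clog 2 k ↔ m < 2*k - 2^(Nat.clog 2 k) := by
  rw [bal_length]
  by_cases h : m < 2*k - 2^(Nat.clog 2 k)
  · simp [h]
  · simp only [if_neg h]
    have hk2 : 2 ≤ k := bal_k2 hm h
    have hL := Nat.clog_pos one_lt_two hk2
    constructor
    · intro he; omega
    · intro hlt; exact absurd hlt h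

lemma bal_lex {k m m' : ℕ} (h1 : m < m') (h2 : m' < k) :
    List.Lex (· < ·) (bal k m) (bal k m') := by
  unfold bal
  by_cases hm' : m' < 2*k - 2^(Nat.clog 2 k)
  · have hm : m < 2*k - 2^(Nat.clog 2 k) := by omega
    rw [if_pos hm, if_pos hm']
    have hk2 := Nat.le_pow_clog one_lt_two k
    exact bitsM_lt h1 (by omega)
  · have hk2 : 2 ≤ k := bal_k2 h2 hm'
    obtain ⟨f1, f2, f3, f4⟩ := clog_facts hk2
    rw [if_neg hm']
    by_cases hm : m < 2*k - 2^(Nat.clog 2 k)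
    · rw [if_pos hm]
      have hsplit : bitsM (Nat.clog 2 k) m
          = bitsM (Nat.clog 2 k - 1) (m/2) ++ [m.testBit 0] := by
        rw [show Nat.clog 2 k = (Nat.clog 2 k - 1) + 1 by omega]
        exact bitsM_succ _ _
      rw [hsplit]
      apply lex_append_left _ _ (by simp [bitsM_length])
      apply bitsM_lt
      · rw [Nat.div_lt_iff_lt_mul (by omega)]
        omega
      · omega
    · rw [if_neg hm]
      exact bitsM_lt (by omega) (by omega)

lemma bal_prefix {k m m' : ℕ} (hm : m < k) (hm' : m' < k)
    (h : bal k m <+: bal k m') : m = m' := by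
  rcases Nat.lt_or_ge k 2 with hklt | hk2
  · omega
  obtain ⟨f1, f2, f3, f4⟩ := clog_facts hk2
  unfold bal at h
  by_cases ht : m < 2*k - 2^(Nat.clog 2 k) <;>
    by_cases ht' : m' < 2*k - 2^(Nat.clog 2 k)
  · rw [if_pos ht, if_pos ht'] at h
    exact bitsM_inj (by omega) (by omega)
      (h.eq_of_length (by simp [bitsM_length]))
  · rw [if_pos ht, if_neg ht'] at h
    have := h.length_le
    simp only [bitsM_length] at this
    omega
  · rw [if_neg ht, if_pos ht'] at h
    exfalso
    have hsplit : bitsM (Nat.clog 2 k) m'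
        = bitsM (Nat.clog 2 k - 1) (m'/2) ++ [m'.testBit 0] := by
      rw [show Nat.clog 2 k = (Nat.clog 2 k - 1) + 1 by omega]
      exact bitsM_succ _ _
    rw [hsplit] at h
    have h2 : bitsM (Nat.clog 2 k - 1) (m + 2^(Nat.clog 2 k - 1) - k)
        <+: bitsM (Nat.clog 2 k - 1) (m'/2) :=
      List.prefix_of_prefix_length_le h (List.prefix_append _ _)
        (by simp [bitsM_length])
    have h3 := bitsM_inj (by omega) (by
        rw [Nat.div_lt_iff_lt_mul (by omega : (0:ℕ) < 2)]
        omega)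
      (h2.eq_of_length (by simp [bitsM_length]))
    omega
  · rw [if_neg ht, if_neg ht'] at h
    have := bitsM_inj (by omega) (by omega)
      (h.eq_of_length (by simp [bitsM_length]))
    omega

section Construction

variable {σ D : ℕ} (c : Fin σ → List Bool)

/-- the length-`D` prefix class of character `i`. -/
def clsF (D : ℕ) (c : Fin σ → List Bool) (i : Fin σ) : Finset (Fin σ) :=
  Finset.univ.filter fun j => (c i).take D <+: c j

/-- the balanced code. -/
def balC (D : ℕ) (c : Fin σ → List Bool) (i : Fin σ) : List Bool :=
  if (c i).length ≤ D then c i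
  else (c i).take D ++ bal (clsF D c i).card (rk (clsF D c i) i)

variable (hpf : ∀ i j : Fin σ, c i <+: c j → c i = c j)
variable (hmono : ∀ i j : Fin σ, i < j → List.Lex (· < ·) (c i) (c j))
variable (hcinj : ∀ i j : Fin σ, c i = c j → i = j)

lemma mem_clsF (i j : Fin σ) : j ∈ clsF D c i ↔ (c i).take D <+: c j := by
  simp [clsF]

lemma length_take_eq {i : Fin σ} (hi : D < (c i).length) :
    ((c i).take D).length = D := by
  rw [List.length_take]; omega

include hpf in
lemma mem_clsF' {i : Fin σ} (hi : D < (c i).length) (j : Fin σ) :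
    j ∈ clsF D c i ↔ D < (c j).length ∧ (c j).take D = (c i).take D := by
  rw [mem_clsF]
  constructor
  · intro h
    have hlen := h.length_le
    rw [length_take_eq c hi] at hlen
    have h2 : (c i).take D = (c j).take D := by
      conv_lhs => rw [List.prefix_iff_eq_take.mp h]
      rw [length_take_eq c hi]
    by_cases hj : D < (c j).length
    · exact ⟨hj, h2.symm⟩
    · exfalso
      have h3 : (c j).length = D := by omega
      have h4 : c j = (c i).take D := by
        rw [h2]; exact (List.take_of_length_le (by omega)).symm
      have h5 : c j <+: c i := by
        rw [h4]; exact List.take_prefix D (c i)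
      have h6 := hpf j i h5
      rw [h6] at h3; omega
  · intro ⟨h1, h2⟩
    rw [← h2]; exact List.take_prefix D (c j)

lemma self_mem_clsF (i : Fin σ) : i ∈ clsF D c i :=
  (mem_clsF c i i).mpr (List.take_prefix D (c i))

include hpf in
lemma clsF_eq {i j : Fin σ} (hi : D < (c i).length) (hj : j ∈ clsF D c i) :
    clsF D c j = clsF D c i := by
  have h2 := ((mem_clsF' c hpf hi j).mp hj).2
  unfold clsF
  rw [h2]

include hpf hcinj in
lemma kraft_clsF {i : Fin σ} (hi : D < (c i).length) :
    (clsF D c i).card ≤ 2 ^ (Finset.univ.sup (fun j => (c j).length) - D) := by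
  apply kraft (clsF D c i) (fun j => (c j).drop D)
  · intro j _
    simp only [List.length_drop]
    have : (c j).length ≤ Finset.univ.sup (fun j => (c j).length) :=
      Finset.le_sup (f := fun j => (c j).length) (Finset.mem_univ j)
    omega
  · intro j hj j' hj' hdrop
    have h2 := ((mem_clsF' c hpf hi j).mp hj).2
    have h2' := ((mem_clsF' c hpf hi j').mp hj').2
    have hpre : c j <+: c j' := by
      conv_lhs => rw [← List.take_append_drop D (c j)]
      conv_rhs => rw [← List.take_append_drop D (c j')]
      rw [h2, h2']
      exact (List.prefix_append_right_inj _).mpr hdrop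
    exact hcinj j j' (hpf j j' hpre)

lemma balC_short {i : Fin σ} (hi : (c i).length ≤ D) : balC D c i = c i := by
  rw [balC, if_pos hi]

lemma balC_long {i : Fin σ} (hi : D < (c i).length) :
    balC D c i = (c i).take D ++ bal (clsF D c i).card (rk (clsF D c i) i) := by
  rw [balC, if_neg (by omega)]

lemma length_balC_long {i : Fin σ} (hi : D < (c i).length) :
    (balC D c i).length = D + (bal (clsF D c i).card (rk (clsF D c i) i)).length := by
  rw [balC_long c hi, List.length_append, length_take_eq c hi]

lemma take_balC {i : Fin σ} (hi : D < (c i).length) :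
    (balC D c i).take D = (c i).take D := by
  rw [balC_long c hi, List.take_append,
    List.take_of_length_le (length_take_eq c hi).le, length_take_eq c hi,
    Nat.sub_self, List.take_zero, List.append_nil]

include hpf hcinj in
lemma balC_prefix : ∀ i j, balC D c i <+: balC D c j → i = j := by
  intro i j h
  by_cases hi : (c i).length ≤ D <;> by_cases hj : (c j).length ≤ D
  · rw [balC_short c hi, balC_short c hj] at h
    exact hcinj _ _ (hpf _ _ h)
  · push_neg at hj
    rw [balC_short c hi] at h
    exfalso
    have h1 : c i <+: (c j).take D := by
      apply List.prefix_of_prefix_length_le h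
      · have h0 : (balC D c j).take D <+: balC D c j := List.take_prefix _ _
        rwa [take_balC c hj] at h0
      · rw [length_take_eq c hj]; exact hi
    have h2 : c i <+: c j := h1.trans (List.take_prefix D (c j))
    have h3 := congrArg List.length (hpf i j h2)
    omega
  · push_neg at hi
    rw [balC_short c hj] at h
    exfalso
    have hlb : D ≤ (balC D c i).length := by rw [length_balC_long c hi]; omega
    have hlen := h.length_le
    have hD : (balC D c i).length = D := by omega
    have hw : (bal (clsF D c i).card (rk (clsF D c i) i)).length = 0 := by
      rw [length_balC_long c hi] at hD; omega
    have hbc : balC D c i = (c i).take D := by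
      rw [balC_long c hi, List.length_eq_zero_iff.mp hw, List.append_nil]
    rw [hbc] at h
    have h3 : (c i).take D = c j :=
      h.eq_of_length (by rw [length_take_eq c hi]; omega)
    have h4 : c j <+: c i := by rw [← h3]; exact List.take_prefix _ _
    have h5 := congrArg List.length (hpf j i h4)
    omega
  · push_neg at hi hj
    have hpij : (c i).take D = (c j).take D := by
      have h1 : (c i).take D <+: balC D c j := by
        refine List.IsPrefix.trans ?_ h
        rw [balC_long c hi]; exact List.prefix_append _ _
      have h2 : (c i).take D = (balC D c j).take D := by
        conv_lhs => rw [List.prefix_iff_eq_take.mp h1]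
        rw [length_take_eq c hi]
      rw [h2, take_balC c hj]
    have hjmem : j ∈ clsF D c i := (mem_clsF' c hpf hi j).mpr ⟨hj, hpij.symm⟩
    have hce := clsF_eq c hpf hi hjmem
    rw [balC_long c hi, balC_long c hj, hce, ← hpij] at h
    have hw := (List.prefix_append_right_inj _).mp h
    have hrk := bal_prefix (rk_lt_card (self_mem_clsF c i)) (rk_lt_card hjmem) hw
    exact rk_injOn (clsF D c i) (Finset.mem_coe.mpr (self_mem_clsF c i))
      (Finset.mem_coe.mpr hjmem) hrk

include hpf hmono hcinj in
lemma balC_mono : ∀ i j, i < j → List.Lex (· < ·) (balC D c i) (balC D c j) := by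
  intro i j hij
  have horig := hmono i j hij
  by_cases hi : (c i).length ≤ D <;> by_cases hj : (c j).length ≤ D
  · rw [balC_short c hi, balC_short c hj]; exact horig
  · push_neg at hj
    rw [balC_short c hi, balC_long c hj]
    have hnp : ¬ c i <+: c j := by
      intro hp
      have := congrArg List.length (hpf i j hp); omega
    have hne : (c i).take D ≠ (c j).take D := by
      intro he
      apply hnp
      rw [List.take_of_length_le hi] at he
      rw [he]; exact List.take_prefix D (c j)
    have hlm := lex_master horig D hnp hne []
      (bal (clsF D c j).card (rk (clsF D c j) j))
    rwa [List.take_of_length_le hi, List.append_nil] at hlm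
  · push_neg at hi
    rw [balC_long c hi, balC_short c hj]
    have hnp : ¬ c i <+: c j := by
      intro hp
      have := congrArg List.length (hpf i j hp); omega
    have hne : (c i).take D ≠ (c j).take D := by
      intro he
      rw [List.take_of_length_le hj] at he
      have h2 : c j <+: c i := by rw [← he]; exact List.take_prefix _ _
      have := congrArg List.length (hpf j i h2); omega
    have hlm := lex_master horig D hnp hne
      (bal (clsF D c i).card (rk (clsF D c i) i)) []
    rwa [List.take_of_length_le hj, List.append_nil] at hlm
  · push_neg at hi hj
    by_cases hpe : (c i).take D = (c j).take D
    · have hjmem : j ∈ clsF D c i := (mem_clsF' c hpf hi j).mpr ⟨hj, hpe.symm⟩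
      have hce := clsF_eq c hpf hi hjmem
      rw [balC_long c hi, balC_long c hj, hce, ← hpe]
      apply lex_append_same
      exact bal_lex (rk_lt_rk (self_mem_clsF c i) hij) (rk_lt_card hjmem)
    · have hnp : ¬ c i <+: c j := by
        intro hp
        exact absurd (hcinj i j (hpf i j hp)) (ne_of_lt hij)
      rw [balC_long c hi, balC_long c hj]
      exact lex_master horig D hnp hpe _ _

end Construction

/-- Completely balancing every subtree of the code tree rooted at depth `D`:
codewords of length at most `D` are unchanged; longer codewords keep their
length-`D` prefix, do not exceed the original maximum length, and within each
length-`D` prefix class of `k` characters the new lengths are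
`D + ⌈log₂ k⌉` or `D + ⌈log₂ k⌉ - 1`, with exactly `2k - 2^⌈log₂ k⌉`
characters of the class receiving the larger length. -/
theorem alphabetic_balance_at_depth (σ : ℕ) (hσ : 1 ≤ σ)
    (c : Fin σ → List Bool) (hc : AlphabeticCode σ c) (D : ℕ) :
    ∃ c' : Fin σ → List Bool, AlphabeticCode σ c' ∧
      (∀ i, (c i).length ≤ D → c' i = c i) ∧
      (∀ i, D < (c i).length →
        (c' i).take D = (c i).take D ∧
        (c' i).length ≤ Finset.univ.sup (fun j => (c j).length)) ∧
      (∀ i, D < (c i).length →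
        ∀ k : ℕ,
          k = (Finset.univ.filter fun j => (c i).take D <+: c j).card →
          ((c' i).length = D + Nat.clog 2 k ∨
            (c' i).length + 1 = D + Nat.clog 2 k) ∧
          (Finset.univ.filter fun j =>
              ((c i).take D <+: c j) ∧
              (c' j).length = D + Nat.clog 2 k).card
            = 2 * k - 2 ^ Nat.clog 2 k) := by
  obtain ⟨hpf0, hmono0⟩ := hc
  have hpf : ∀ i j : Fin σ, c i <+: c j → c i = c j := fun i j h =>
    hpf0 _ ⟨i, rfl⟩ _ ⟨j, rfl⟩ h
  have hmono : ∀ i j : Fin σ, i < j → List.Lex (· < ·) (c i) (c j) := hmono0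
  have hcinj : ∀ i j : Fin σ, c i = c j → i = j := by
    intro i j h
    rcases lt_trichotomy i j with h1 | h1 | h1
    · exact absurd (h ▸ hmono i j h1) (lexLT_irrefl' _)
    · exact h1
    · exact absurd (h ▸ hmono j i h1) (lexLT_irrefl' _)
  refine ⟨balC D c, ⟨?_, ?_⟩, ?_, ?_, ?_⟩
  · -- prefix free
    rintro u ⟨i, rfl⟩ v ⟨j, rfl⟩ h
    rw [balC_prefix c hpf hcinj i j h]
  · -- alphabetic
    exact balC_mono c hpf hmono hcinj
  · -- short codewords unchanged
    exact fun i hi => balC_short c hi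
  · -- prefix kept and length bound
    intro i hi
    refine ⟨take_balC c hi, ?_⟩
    rw [length_balC_long c hi]
    have h1 := bal_length_le (clsF D c i).card (rk (clsF D c i) i)
    have h2 := kraft_clsF c hpf hcinj hi
    have h3 := (Nat.clog_le_iff_le_pow one_lt_two).mpr h2
    have h4 : (c i).length ≤ Finset.univ.sup (fun j => (c j).length) :=
      Finset.le_sup (f := fun j => (c j).length) (Finset.mem_univ i)
    omega
  · -- the class-size counting statement
    intro i hi k hk
    rw [show (Finset.univ.filter fun j => (c i).take D <+: c j) = clsF D c i
        from rfl] at hk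
    subst hk
    have hkle : (clsF D c i).card ≤ 2 ^ Nat.clog 2 (clsF D c i).card := Nat.le_pow_clog one_lt_two (clsF D c i).card
    have hrkiK : rk (clsF D c i) i < (clsF D c i).card := rk_lt_card (self_mem_clsF c i)
    constructor
    · -- length dichotomy for i itself
      rw [length_balC_long c hi]
      by_cases hmt : rk (clsF D c i) i < 2*(clsF D c i).card - 2^(Nat.clog 2 (clsF D c i).card)
      · left
        rw [bal_length, if_pos hmt]
      · right
        have hk2 : 2 ≤ (clsF D c i).card := bal_k2 hrkiK hmt
        have hL := Nat.clog_pos one_lt_two hk2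
        rw [bal_length, if_neg hmt]
        omega
    · -- counting
      have hsetEq : (Finset.univ.filter fun j =>
            ((c i).take D <+: c j) ∧ (balC D c j).length = D + Nat.clog 2 (clsF D c i).card)
          = (clsF D c i).filter
              (fun j => rk (clsF D c i) j < 2*(clsF D c i).card - 2^(Nat.clog 2 (clsF D c i).card)) := by
        ext j
        simp only [Finset.mem_filter, Finset.mem_univ, true_and]
        constructor
        · rintro ⟨h1, h2⟩
          have hjm : j ∈ clsF D c i := (mem_clsF c i j).mpr h1
          refine ⟨hjm, ?_⟩
          have hj1 := ((mem_clsF' c hpf hi j).mp hjm).1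
          rw [length_balC_long c hj1, clsF_eq c hpf hi hjm] at h2
          have h3 : (bal (clsF D c i).card (rk (clsF D c i) j)).length = Nat.clog 2 (clsF D c i).card := by omega
          exact (bal_length_iff (rk_lt_card hjm)).mp h3
        · rintro ⟨hjm, h2⟩
          refine ⟨(mem_clsF c i j).mp hjm, ?_⟩
          have hj1 := ((mem_clsF' c hpf hi j).mp hjm).1
          rw [length_balC_long c hj1, clsF_eq c hpf hi hjm]
          have h3 : (bal (clsF D c i).card (rk (clsF D c i) j)).length = Nat.clog 2 (clsF D c i).card :=
            (bal_length_iff (rk_lt_card hjm)).mpr h2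
          omega
      rw [hsetEq]
      exact rk_count (by omega)
end

section
/- For every σ ≥ 4 and every probability distribution p on {0,…,σ−1} (p(i) ≥ 0, Σ_i p(i) = 1), there exists an alphabetic prefix-free code c on σ characters such that max_i |c(i)| ≤ log₂ σ + √(log₂ σ) + 3 and Σ_i p(i)·|c(i)| ≤ (1 + 1/⌈√(log₂ σ)⌉) · ((log₂ σ + √(log₂ σ) + 3) / ⌈log₂ σ − √(log₂ σ)⌉) · OPT, where OPT is the minimum of Σ_i p(i)·|c*(i)| over all alphabetic prefix-free codes c* on σ characters. Moreover c can be chosen so that each set of codewords sharing a common prefix of length ⌈log₂ σ − √(log₂ σ)⌉ has lengths differing by at most 1 (completely balanced subtrees). -/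
namespace NOBAC

/-- Incomparable in the prefix order. -/
def Incomp (u v : List Bool) : Prop := ¬ u <+: v ∧ ¬ v <+: u

lemma lexLT_irrefl (l : List Bool) : ¬ lexLT l l := by
  induction l with
  | nil => intro h; cases h
  | cons a t ih =>
    intro h
    cases h with
    | cons h => exact ih h
    | rel h => exact lt_irrefl _ h

lemma lexLT_ne {u v : List Bool} (h : lexLT u v) : u ≠ v := by
  rintro rfl; exact lexLT_irrefl _ h

lemma Incomp.symm {u v : List Bool} (h : Incomp u v) : Incomp v u := ⟨h.2, h.1⟩

/-- For incomparable words, lex order is preserved by appending. -/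
lemma lex_append_iff : ∀ (u v x y : List Bool), Incomp u v →
    (lexLT (u ++ x) (v ++ y) ↔ lexLT u v) := by
  intro u
  induction u with
  | nil => intro v x y h; exact absurd (List.nil_prefix) h.1
  | cons a u ih =>
    intro v x y h
    match v with
    | [] => exact absurd (List.nil_prefix) h.2
    | b :: v =>
      by_cases hab : a = b
      · subst hab
        have h' : Incomp u v := by
          constructor
          · intro hp; exact h.1 (List.cons_prefix_cons.2 ⟨rfl, hp⟩)
          · intro hp; exact h.2 (List.cons_prefix_cons.2 ⟨rfl, hp⟩)
        constructor
        · intro hlex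
          cases hlex with
          | cons hl => exact List.Lex.cons ((ih v x y h').1 hl)
          | rel hr => exact absurd hr (lt_irrefl _)
        · intro hlex
          cases hlex with
          | cons hl => exact List.Lex.cons ((ih v x y h').2 hl)
          | rel hr => exact absurd hr (lt_irrefl _)
      · constructor
        · intro hlex
          cases hlex with
          | cons hl => exact absurd rfl hab
          | rel hr => exact List.Lex.rel hr
        · intro hlex
          cases hlex with
          | cons hl => exact absurd rfl hab
          | rel hr => exact List.Lex.rel hr

/-- Appending preserves prefix-incomparability. -/
lemma incomp_append : ∀ (u v x y : List Bool), Incomp u v →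
    Incomp (u ++ x) (v ++ y) := by
  intro u
  induction u with
  | nil => intro v x y h; exact absurd (List.nil_prefix) h.1
  | cons a u ih =>
    intro v x y h
    match v with
    | [] => exact absurd (List.nil_prefix) h.2
    | b :: v =>
      by_cases hab : a = b
      · subst hab
        have h' : Incomp u v := by
          constructor
          · intro hp; exact h.1 (List.cons_prefix_cons.2 ⟨rfl, hp⟩)
          · intro hp; exact h.2 (List.cons_prefix_cons.2 ⟨rfl, hp⟩)
        have := ih v x y h'
        constructor
        · intro hp
          exact this.1 (List.cons_prefix_cons.1 hp).2
        · intro hp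
          exact this.2 (List.cons_prefix_cons.1 hp).2
      · constructor
        · intro hp; exact hab (List.cons_prefix_cons.1 hp).1
        · intro hp; exact hab ((List.cons_prefix_cons.1 hp).1).symm

lemma lex_append_left (u : List Bool) {x y : List Bool} (h : lexLT x y) :
    lexLT (u ++ x) (u ++ y) := by
  induction u with
  | nil => exact h
  | cons a u ih => exact List.Lex.cons ih

/-- Equal-length distinct words are incomparable. -/
lemma incomp_of_length_eq {u v : List Bool} (hl : u.length = v.length) (hne : u ≠ v) :
    Incomp u v := by
  constructor
  · intro hp
    exact hne (List.IsPrefix.eq_of_length hp hl)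
  · intro hp
    exact hne ((List.IsPrefix.eq_of_length hp hl.symm)).symm


def wd : ℕ → ℕ → List Bool
  | 0, _ => []
  | (k+1), n => n.testBit k :: wd k n

@[simp] lemma wd_length (k n : ℕ) : (wd k n).length = k := by
  induction k with
  | zero => rfl
  | succ k ih => simp [wd, ih]

/-- `wd k` only depends on the low `k` bits. -/
lemma wd_congr (k : ℕ) {n m : ℕ} (h : ∀ j < k, n.testBit j = m.testBit j) :
    wd k n = wd k m := by
  induction k with
  | zero => rfl
  | succ k ih =>
    simp only [wd]
    rw [h k (Nat.lt_succ_self k), ih (fun j hj => h j (Nat.lt_succ_of_lt hj))]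

lemma wd_eq_iff_testBit {k n m : ℕ} (h : wd k n = wd k m) :
    ∀ j < k, n.testBit j = m.testBit j := by
  induction k with
  | zero => intro j hj; omega
  | succ k ih =>
    intro j hj
    simp only [wd, List.cons.injEq] at h
    rcases Nat.lt_succ_iff_lt_or_eq.1 hj with hj' | rfl
    · exact ih h.2 j hj'
    · exact h.1

lemma wd_inj {k n m : ℕ} (hn : n < 2 ^ k) (hm : m < 2 ^ k) (h : wd k n = wd k m) :
    n = m := by
  apply Nat.eq_of_testBit_eq
  intro j
  by_cases hj : j < k
  · exact wd_eq_iff_testBit h j hj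
  · rw [Nat.testBit_eq_false_of_lt, Nat.testBit_eq_false_of_lt]
    · exact lt_of_lt_of_le hm (Nat.pow_le_pow_right (by norm_num) (le_of_not_gt hj))
    · exact lt_of_lt_of_le hn (Nat.pow_le_pow_right (by norm_num) (le_of_not_gt hj))

lemma wd_take (j k n : ℕ) (h : j ≤ k) :
    (wd k n).take j = wd j (n / 2 ^ (k - j)) := by
  induction k generalizing j with
  | zero =>
    have : j = 0 := Nat.le_zero.1 h
    subst this; rfl
  | succ k ih =>
    match j with
    | 0 => rfl
    | (j'+1) =>
      have hj' : j' ≤ k := Nat.succ_le_succ_iff.1 h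
      simp only [wd, List.take_succ_cons]
      have hsub : k + 1 - (j' + 1) = k - j' := by omega
      rw [hsub]
      have hbit : (n / 2 ^ (k - j')).testBit j' = n.testBit k := by
        rw [← Nat.shiftRight_eq_div_pow, Nat.testBit_shiftRight]
        congr 1
        omega
      rw [hbit, ih j' hj']


lemma testBit_top {x k : ℕ} (hx : x < 2 ^ (k + 1)) : x.testBit k = true ↔ 2 ^ k ≤ x := by
  have hd : x / 2 ^ k < 2 := by
    apply Nat.div_lt_of_lt_mul
    rw [pow_succ] at hx
    omega
  rw [Nat.testBit_eq_decide_div_mod_eq]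
  have h2 : 0 < 2 ^ k := Nat.pow_pos (by norm_num)
  have hdam := Nat.div_add_mod x (2 ^ k)
  have hmod : x % 2 ^ k < 2 ^ k := Nat.mod_lt _ h2
  constructor
  · intro h
    have h1 : x / 2 ^ k % 2 = 1 := of_decide_eq_true h
    have h2' : x / 2 ^ k = 1 := by
      interval_cases h0 : (x / 2 ^ k)
      · simp at h1
      · rfl

    rw [h2'] at hdam
    omega
  · intro h
    have hdx : x / 2 ^ k = 1 := by
      have : 1 ≤ x / 2 ^ k := (Nat.one_le_div_iff h2).2 h
      omega
    simp [hdx]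

lemma wd_lex {k n m : ℕ} (hm : m < 2 ^ k) (hnm : n < m) :
    lexLT (wd k n) (wd k m) := by
  induction k generalizing n m with
  | zero => simp at hm; omega
  | succ k ih =>
    have hn : n < 2 ^ (k + 1) := lt_trans hnm hm
    have h2 : 0 < 2 ^ k := Nat.pow_pos (by norm_num)
    have hpow : 2 ^ (k+1) = 2 ^ k * 2 := pow_succ 2 k
    by_cases hnt : 2 ^ k ≤ n
    · -- then 2^k ≤ m as well, heads both true
      have hmt : 2 ^ k ≤ m := le_of_lt (lt_of_le_of_lt hnt hnm)
      have hb1 : n.testBit k = true := (testBit_top hn).2 hnt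
      have hb2 : m.testBit k = true := (testBit_top hm).2 hmt
      simp only [wd, hb1, hb2]
      apply List.Lex.cons
      have e1 : wd k n = wd k (n % 2 ^ k) := (wd_congr k (fun j hj => by
        rw [Nat.testBit_mod_two_pow]; simp [hj])).symm
      have e2 : wd k m = wd k (m % 2 ^ k) := (wd_congr k (fun j hj => by
        rw [Nat.testBit_mod_two_pow]; simp [hj])).symm
      rw [e1, e2]
      apply ih
      · exact Nat.mod_lt _ h2
      · have dn := Nat.div_add_mod n (2 ^ k)
        have dm := Nat.div_add_mod m (2 ^ k)
        have hdn : n / 2 ^ k = 1 := by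
          have : n / 2 ^ k < 2 := Nat.div_lt_of_lt_mul (by omega)
          have : 1 ≤ n / 2 ^ k := (Nat.one_le_div_iff h2).2 hnt
          omega
        have hdm : m / 2 ^ k = 1 := by
          have : m / 2 ^ k < 2 := Nat.div_lt_of_lt_mul (by omega)
          have : 1 ≤ m / 2 ^ k := (Nat.one_le_div_iff h2).2 hmt
          omega
        rw [hdn] at dn
        rw [hdm] at dm
        omega
    · push_neg at hnt
      by_cases hmt : 2 ^ k ≤ m
      · have hb1 : n.testBit k = false := by
          rw [← Bool.not_eq_true, testBit_top hn]; omega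
        have hb2 : m.testBit k = true := (testBit_top hm).2 hmt
        simp only [wd, hb1, hb2]
        exact List.Lex.rel (by decide)
      · push_neg at hmt
        have hb1 : n.testBit k = false := by
          rw [← Bool.not_eq_true, testBit_top hn]; omega
        have hb2 : m.testBit k = false := by
          rw [← Bool.not_eq_true, testBit_top hm]; omega
        simp only [wd, hb1, hb2]
        apply List.Lex.cons
        exact ih hmt hnm

lemma wd_prefix_iff {j k i n : ℕ} (hi : i < 2 ^ j) (hn : n < 2 ^ k) (hjk : j ≤ k) :
    wd j i <+: wd k n ↔ i = n / 2 ^ (k - j) := by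
  have hq : n / 2 ^ (k - j) < 2 ^ j := by
    apply Nat.div_lt_of_lt_mul
    rw [← pow_add]
    have : k - j + j = k := by omega
    rw [this]; exact hn
  constructor
  · intro hp
    have h3 := List.prefix_iff_eq_take.1 hp
    rw [wd_length] at h3
    rw [wd_take j k n hjk] at h3
    exact wd_inj hi hq h3
  · intro h
    subst h
    rw [← wd_take j k n hjk]
    exact List.take_prefix _ _


/-- Key separation lemma: if the scaled dyadic intervals of two words are
separated then the words are prefix-incomparable and lex-ordered. -/
lemma wd_sep {e f M ni nj : ℕ} (heM : e ≤ M) (hfM : f ≤ M)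
    (hni : ni < 2 ^ e) (hnj : nj < 2 ^ f)
    (hsep : ni * 2 ^ (M - e) + 2 ^ (M - e) ≤ nj * 2 ^ (M - f)) :
    Incomp (wd e ni) (wd f nj) ∧ lexLT (wd e ni) (wd f nj) := by
  have h2e : (0:ℕ) < 2 ^ (M - e) := Nat.pow_pos (by norm_num)
  have h2f : (0:ℕ) < 2 ^ (M - f) := Nat.pow_pos (by norm_num)
  have hvi : ni * 2 ^ (M - e) < 2 ^ M := by
    calc ni * 2 ^ (M - e) < (ni + 1) * 2 ^ (M - e) := by
          exact (Nat.mul_lt_mul_right h2e).2 (Nat.lt_succ_self ni)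
      _ ≤ 2 ^ e * 2 ^ (M - e) := Nat.mul_le_mul_right _ hni
      _ = 2 ^ M := by rw [← pow_add]; congr 1; omega
  have hvj : nj * 2 ^ (M - f) < 2 ^ M := by
    calc nj * 2 ^ (M - f) < (nj + 1) * 2 ^ (M - f) := by
          exact (Nat.mul_lt_mul_right h2f).2 (Nat.lt_succ_self nj)
      _ ≤ 2 ^ f * 2 ^ (M - f) := Nat.mul_le_mul_right _ hnj
      _ = 2 ^ M := by rw [← pow_add]; congr 1; omega
  -- values
  have hviv : ni * 2 ^ (M - e) / 2 ^ (M - e) = ni := Nat.mul_div_cancel _ h2e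
  have hvjv : nj * 2 ^ (M - f) / 2 ^ (M - f) = nj := Nat.mul_div_cancel _ h2f
  have hinc : Incomp (wd e ni) (wd f nj) := by
    constructor
    · intro hp
      by_cases hef : e ≤ f
      · have := (wd_prefix_iff hni hnj hef).1 hp
        -- ni = nj / 2^(f-e), so nj < (ni+1) * 2^(f-e)
        have hub : nj < (ni + 1) * 2 ^ (f - e) := by
          rw [this]
          have hdm := Nat.div_add_mod nj (2 ^ (f - e))
          have hmlt : nj % 2 ^ (f - e) < 2 ^ (f - e) :=
            Nat.mod_lt _ (Nat.pow_pos (by norm_num))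
          have : (nj / 2 ^ (f - e) + 1) * 2 ^ (f - e)
              = 2 ^ (f - e) * (nj / 2 ^ (f - e)) + 2 ^ (f - e) := by ring
          omega
        -- multiply by 2^(M-f)
        have hmul : nj * 2 ^ (M - f) < (ni + 1) * (2 ^ (f - e) * 2 ^ (M - f)) := by
          calc nj * 2 ^ (M - f) < ((ni + 1) * 2 ^ (f - e)) * 2 ^ (M - f) :=
                (Nat.mul_lt_mul_right h2f).2 hub
            _ = (ni + 1) * (2 ^ (f - e) * 2 ^ (M - f)) := by ring
        rw [← pow_add] at hmul
        have hee : f - e + (M - f) = M - e := by omega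
        rw [hee] at hmul
        -- contradiction with hsep
        have : (ni + 1) * 2 ^ (M - e) = ni * 2 ^ (M-e) + 2 ^ (M-e) := by ring
        omega
      · push_neg at hef
        have hle := hp.length_le
        rw [wd_length, wd_length] at hle
        omega
    · intro hp
      by_cases hfe : f ≤ e
      · have := (wd_prefix_iff hnj hni hfe).1 hp
        have hub : ni ≥ nj * 2 ^ (e - f) := by
          rw [this]
          exact Nat.div_mul_le_self ni _
        have hmul : nj * (2 ^ (e - f) * 2 ^ (M - e)) ≤ ni * 2 ^ (M - e) := by
          calc nj * (2 ^ (e-f) * 2 ^ (M-e)) = (nj * 2 ^ (e-f)) * 2 ^ (M-e) := by ring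
            _ ≤ ni * 2 ^ (M - e) := Nat.mul_le_mul_right _ hub
        rw [← pow_add] at hmul
        have hee : e - f + (M - e) = M - f := by omega
        rw [hee] at hmul
        omega
      · push_neg at hfe
        have hle := hp.length_le
        rw [wd_length, wd_length] at hle
        omega
  refine ⟨hinc, ?_⟩
  -- lex via the length-M extensions
  have hpi : wd e ni <+: wd M (ni * 2 ^ (M - e)) := by
    rw [wd_prefix_iff hni hvi heM, hviv]
  have hpj : wd f nj <+: wd M (nj * 2 ^ (M - f)) := by
    rw [wd_prefix_iff hnj hvj hfM, hvjv]
  obtain ⟨x, hx⟩ := hpi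
  obtain ⟨y, hy⟩ := hpj
  have hlexM : lexLT (wd M (ni * 2 ^ (M - e))) (wd M (nj * 2 ^ (M - f))) := by
    apply wd_lex hvj
    omega
  rw [← hx, ← hy] at hlexM
  exact (lex_append_iff _ _ _ _ hinc).1 hlexM


/-- Kraft's inequality for a finite prefix-free set of bit strings. -/
lemma kraft (n : ℕ) : ∀ (S : Finset (List Bool)),
    (∀ w ∈ S, w.length ≤ n) →
    (∀ u ∈ S, ∀ v ∈ S, u <+: v → u = v) →
    ∑ w ∈ S, ((2:ℝ) ^ w.length)⁻¹ ≤ 1 := by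
  induction n with
  | zero =>
    intro S hlen hpf
    rcases S.eq_empty_or_nonempty with rfl | ⟨w, hw⟩
    · simp
    · have : ∀ v ∈ S, v = [] := by
        intro v hv
        have := hlen v hv
        simpa [List.length_eq_zero_iff] using this
      have hS : S = {[]} := by
        apply Finset.eq_singleton_iff_unique_mem.2
        exact ⟨(this w hw) ▸ hw, this⟩
      rw [hS]; simp
  | succ n ih =>
    intro S hlen hpf
    by_cases hnil : [] ∈ S
    · have hS : S = {[]} := by
        apply Finset.eq_singleton_iff_unique_mem.2
        refine ⟨hnil, fun v hv => ?_⟩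
        exact (hpf [] hnil v hv (List.nil_prefix)).symm
      rw [hS]; simp
    · -- split by head
      classical
      have key : ∀ b : Bool,
          ∑ w ∈ S.filter (fun w => w.head? = some b), ((2:ℝ) ^ w.length)⁻¹ ≤ 1/2 := by
        intro b
        set T := (S.filter (fun w => w.head? = some b)).image List.tail with hT
        have htail : ∀ w ∈ S.filter (fun w => w.head? = some b), w = b :: w.tail := by
          intro w hw
          rcases Finset.mem_filter.1 hw with ⟨hwS, hwb⟩
          match w, hwb with
          | (x :: t), hwb => simp_all
        have hinj : ∀ w ∈ S.filter (fun w => w.head? = some b),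
            ∀ v ∈ S.filter (fun w => w.head? = some b), w.tail = v.tail → w = v := by
          intro w hw v hv he
          rw [htail w hw, htail v hv, he]
        have hTlen : ∀ w ∈ T, w.length ≤ n := by
          intro w hw
          rcases Finset.mem_image.1 hw with ⟨v, hv, rfl⟩
          have := hlen v (Finset.mem_filter.1 hv).1
          have hv' := htail v hv
          rw [hv'] at this
          simpa using Nat.succ_le_succ_iff.1 this
        have hTpf : ∀ u ∈ T, ∀ v ∈ T, u <+: v → u = v := by
          intro u hu v hv hp
          rcases Finset.mem_image.1 hu with ⟨u', hu', rfl⟩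
          rcases Finset.mem_image.1 hv with ⟨v', hv', rfl⟩
          have : u' <+: v' := by
            rw [htail u' hu', htail v' hv']
            exact List.cons_prefix_cons.2 ⟨rfl, hp⟩
          have := hpf u' (Finset.mem_filter.1 hu').1 v' (Finset.mem_filter.1 hv').1 this
          rw [this]
        have hsum : ∑ w ∈ S.filter (fun w => w.head? = some b), ((2:ℝ) ^ w.length)⁻¹
            = ∑ w ∈ T, ((2:ℝ) ^ w.length)⁻¹ / 2 := by
          rw [hT, Finset.sum_image (by intro x hx y hy; exact hinj x hx y hy)]
          apply Finset.sum_congr rfl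
          intro w hw
          rw [htail w hw]
          simp [pow_succ]
          ring
        rw [hsum]
        rw [← Finset.sum_div]
        have := ih T hTlen hTpf
        linarith
      have hsplit : S = S.filter (fun w => w.head? = some false)
          ∪ S.filter (fun w => w.head? = some true) := by
        ext w
        simp only [Finset.mem_union, Finset.mem_filter]
        constructor
        · intro hw
          match w with
          | [] => exact absurd hw hnil
          | (true :: t) => exact Or.inr ⟨hw, rfl⟩
          | (false :: t) => exact Or.inl ⟨hw, rfl⟩
        · rintro (⟨h, _⟩ | ⟨h, _⟩) <;> exact h
      have hdisj : Disjoint (S.filter (fun w => w.head? = some false))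
          (S.filter (fun w => w.head? = some true)) := by
        rw [Finset.disjoint_left]
        intro w hw1 hw2
        have h1 := (Finset.mem_filter.1 hw1).2
        have h2 := (Finset.mem_filter.1 hw2).2
        rw [h1] at h2
        simp at h2
      rw [hsplit, Finset.sum_union hdisj]
      have h1 := key false
      have h2 := key true
      linarith


/-- Gilbert–Moore style construction: any lengths with Kraft sum ≤ 1/2 are
realizable by an ordered prefix-free family. -/
lemma gm (σ : ℕ) (T : Finset (Fin σ)) (e : Fin σ → ℕ)
    (hk : ∑ i ∈ T, ((2:ℝ) ^ (e i))⁻¹ ≤ 1/2) :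
    ∃ w : Fin σ → List Bool,
      (∀ i ∈ T, (w i).length = e i) ∧
      (∀ i ∈ T, ∀ j ∈ T, i < j → lexLT (w i) (w j) ∧ Incomp (w i) (w j)) := by
  classical
  set M := T.sup e with hM
  have heM : ∀ i ∈ T, e i ≤ M := fun i hi => Finset.le_sup hi
  -- nat Kraft inequality
  have hknat : ∑ i ∈ T, 2 ^ (M + 1 - e i) ≤ 2 ^ M := by
    have hcast : ((∑ i ∈ T, 2 ^ (M + 1 - e i) : ℕ) : ℝ)
        = ∑ i ∈ T, (2:ℝ) ^ (M+1) * ((2:ℝ) ^ (e i))⁻¹ := by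
      push_cast
      apply Finset.sum_congr rfl
      intro i hi
      have h1 : (2:ℝ) ^ (M + 1 - e i) * (2:ℝ) ^ (e i) = (2:ℝ) ^ (M + 1) := by
        rw [← pow_add]
        congr 1
        have := heM i hi
        omega
      have h2 : ((2:ℝ) ^ (e i)) ≠ 0 := by positivity
      field_simp
      linarith [h1]
    have : ((∑ i ∈ T, 2 ^ (M + 1 - e i) : ℕ) : ℝ) ≤ (2:ℝ) ^ M := by
      rw [hcast, ← Finset.mul_sum]
      calc (2:ℝ) ^ (M+1) * ∑ i ∈ T, ((2:ℝ) ^ (e i))⁻¹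
          ≤ (2:ℝ) ^ (M+1) * (1/2) := by
            apply mul_le_mul_of_nonneg_left hk (by positivity)
        _ = (2:ℝ) ^ M := by rw [pow_succ]; ring
    have h2M : ((2:ℕ) ^ M : ℝ) = (2:ℝ) ^ M := by push_cast; ring
    rw [← h2M] at this
    exact_mod_cast this
  -- the construction
  set A : Fin σ → ℕ := fun i => ∑ j ∈ T.filter (fun j => j < i), 2 ^ (M + 1 - e j) with hA
  set a : Fin σ → ℕ := fun i => A i + 2 ^ (M - e i) with ha
  set nn : Fin σ → ℕ := fun i => a i / 2 ^ (M - e i) with hnn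
  refine ⟨fun i => wd (e i) (nn i), fun i _ => wd_length _ _, ?_⟩
  have hbound : ∀ i ∈ T, a i + 2 ^ (M - e i) ≤ 2 ^ M := by
    intro i hi
    have hsplit : A i + 2 ^ (M + 1 - e i) ≤ ∑ j ∈ T, 2 ^ (M + 1 - e j) := by
      have : A i + 2 ^ (M + 1 - e i) = ∑ j ∈ insert i (T.filter (fun j => j < i)), 2 ^ (M + 1 - e j) := by
        rw [Finset.sum_insert (by simp)]
        ring
      rw [this]
      apply Finset.sum_le_sum_of_subset
      intro j hj
      rcases Finset.mem_insert.1 hj with rfl | hj'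
      · exact hi
      · exact (Finset.mem_filter.1 hj').1
    have hpow : 2 ^ (M + 1 - e i) = 2 * 2 ^ (M - e i) := by
      rw [← pow_succ']
      congr 1
      have := heM i hi
      omega
    simp only [ha]
    omega
  have hnlt : ∀ i ∈ T, nn i < 2 ^ (e i) := by
    intro i hi
    have h1 : a i < 2 ^ M := by
      have := hbound i hi
      have : 0 < 2 ^ (M - e i) := Nat.pow_pos (by norm_num)
      omega
    simp only [hnn]
    apply Nat.div_lt_of_lt_mul
    calc a i < 2 ^ M := h1
      _ = 2 ^ (e i) * 2 ^ (M - e i) := by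
          rw [← pow_add]; congr 1; have := heM i hi; omega
      _ = 2 ^ (M - e i) * 2 ^ (e i) := by ring
  intro i hi j hj hij
  -- separation
  have hAij : A i + 2 ^ (M + 1 - e i) ≤ A j := by
    have hsub : insert i (T.filter (fun k => k < i)) ⊆ T.filter (fun k => k < j) := by
      intro k hk
      rcases Finset.mem_insert.1 hk with rfl | hk'
      · exact Finset.mem_filter.2 ⟨hi, hij⟩
      · rcases Finset.mem_filter.1 hk' with ⟨h1, h2⟩
        exact Finset.mem_filter.2 ⟨h1, lt_trans h2 hij⟩
    calc A i + 2 ^ (M + 1 - e i)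
        = ∑ k ∈ insert i (T.filter (fun k => k < i)), 2 ^ (M + 1 - e k) := by
          rw [Finset.sum_insert (by simp)]; ring
      _ ≤ A j := Finset.sum_le_sum_of_subset hsub
  have hvi : nn i * 2 ^ (M - e i) ≤ a i := Nat.div_mul_le_self _ _
  have hvj : a j < nn j * 2 ^ (M - e j) + 2 ^ (M - e j) := by
    have hdm := Nat.div_add_mod (a j) (2 ^ (M - e j))
    have hmlt : a j % 2 ^ (M - e j) < 2 ^ (M - e j) :=
      Nat.mod_lt _ (Nat.pow_pos (by norm_num))
    have hc : nn j * 2 ^ (M - e j) = 2 ^ (M - e j) * (a j / 2 ^ (M - e j)) := by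
      simp only [hnn]; ring
    rw [hc]
    omega
  have hpow_i : 2 ^ (M + 1 - e i) = 2 * 2 ^ (M - e i) := by
    rw [← pow_succ']; congr 1; have := heM i hi; omega
  have hsep : nn i * 2 ^ (M - e i) + 2 ^ (M - e i) ≤ nn j * 2 ^ (M - e j) := by
    have h1 : a i + 2 ^ (M - e i) ≤ A j := by
      simp only [ha] at *
      omega
    have h2 : A j + 2 ^ (M - e j) = a j := rfl
    omega
  have := wd_sep (heM i hi) (heM j hj) (hnlt i hi) (hnlt j hj) hsep
  exact ⟨this.2, this.1⟩


lemma transform (σ : ℕ) (hσ2 : 2 ≤ σ) (cstar : Fin σ → List Bool)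
    (hA : AlphabeticCode σ cstar)
    (τ D L₀ : ℕ) (hL : σ ≤ 2 ^ L₀) (hτD : τ + 1 ≤ D) (F : ℝ) (hF1 : 1 ≤ F)
    (hP1 : (τ:ℝ) + 3 ≤ F * ((τ:ℝ)+1))
    (hP2 : (L₀:ℝ) + (τ:ℝ) + 3 ≤ F * ((max (τ+1) (D-1) : ℕ) : ℝ)) :
    ∃ c' : Fin σ → List Bool, AlphabeticCode σ c' ∧
      (∀ i, (c' i).length ≤ max D (L₀ + τ + 3)) ∧
      (∀ i, ((c' i).length : ℝ) ≤ F * ((cstar i).length : ℝ)) ∧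
      (∀ i j, D ≤ (c' i).length → D ≤ (c' j).length →
        (c' i).take D = (c' j).take D → (c' i).length ≤ (c' j).length + 1) := by
  classical
  set d : Fin σ → ℕ := fun i => (cstar i).length with hd
  have hpf : ∀ i j : Fin σ, cstar i <+: cstar j → cstar i = cstar j := by
    intro i j hp
    exact hA.1 _ ⟨i, rfl⟩ _ ⟨j, rfl⟩ hp
  have hinj : ∀ i j : Fin σ, i ≠ j → cstar i ≠ cstar j := by
    intro i j hne
    rcases lt_or_gt_of_ne hne with h | h
    · exact lexLT_ne (hA.2 i j h)
    · exact (lexLT_ne (hA.2 j i h)).symm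
  have hpfne : ∀ i j : Fin σ, i ≠ j → ¬ (cstar i <+: cstar j) := by
    intro i j hne hp
    exact hinj i j hne (hpf i j hp)
  have hd1 : ∀ i, 1 ≤ d i := by
    intro i
    by_contra h
    push_neg at h
    have hnil : cstar i = [] := by
      have : d i = 0 := by omega
      exact List.length_eq_zero_iff.1 this
    haveI : Nontrivial (Fin σ) := Fin.nontrivial_iff_two_le.2 hσ2
    obtain ⟨j, hj⟩ := exists_ne i
    exact hpfne i j (Ne.symm hj) (hnil ▸ List.nil_prefix)
  set r : Fin σ → List Bool := fun i => (cstar i).take (τ+1) with hr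
  have hrpre : ∀ i, r i <+: cstar i := fun i => List.take_prefix _ _
  have hrlen : ∀ i, τ + 1 ≤ d i → (r i).length = τ + 1 := by
    intro i hi
    simp only [hr, List.length_take]
    have hi' : τ + 1 ≤ (cstar i).length := hi
    omega
  set e : Fin σ → ℕ := fun i => if d i + 2 ≤ D then d i + 2 - (τ+1) else L₀ + 2 with he
  set T : List Bool → Finset (Fin σ) :=
    fun ρ => Finset.univ.filter (fun j => τ + 1 ≤ d j ∧ (cstar j).take (τ+1) = ρ) with hT
  have hkraft : ∀ ρ, ∑ i ∈ T ρ, ((2:ℝ) ^ (e i))⁻¹ ≤ 1/2 := by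
    intro ρ
    have hsplit : T ρ = (T ρ).filter (fun i => d i + 2 ≤ D)
        ∪ (T ρ).filter (fun i => ¬ (d i + 2 ≤ D)) := (Finset.filter_union_filter_not_eq _ _).symm
    have hdisj : Disjoint ((T ρ).filter (fun i => d i + 2 ≤ D))
        ((T ρ).filter (fun i => ¬ (d i + 2 ≤ D))) := Finset.disjoint_filter_filter_not _ _ _
    rw [hsplit, Finset.sum_union hdisj]
    have hshort : ∑ i ∈ (T ρ).filter (fun i => d i + 2 ≤ D), ((2:ℝ) ^ (e i))⁻¹ ≤ 1/4 := by
      set S := ((T ρ).filter (fun i => d i + 2 ≤ D)).image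
        (fun i => (cstar i).drop (τ+1)) with hS
      have hmemdeep : ∀ i ∈ (T ρ).filter (fun i => d i + 2 ≤ D), τ + 1 ≤ d i ∧ (cstar i).take (τ+1) = ρ := by
        intro i hi
        exact (Finset.mem_filter.1 (Finset.mem_filter.1 hi).1).2
      have hinjS : ∀ i ∈ (T ρ).filter (fun i => d i + 2 ≤ D),
          ∀ j ∈ (T ρ).filter (fun i => d i + 2 ≤ D),
          (cstar i).drop (τ+1) = (cstar j).drop (τ+1) → i = j := by
        intro i hi j hj hdrop
        by_contra hne
        apply hinj i j hne
        have h1 := (hmemdeep i hi).2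
        have h2 := (hmemdeep j hj).2
        calc cstar i = (cstar i).take (τ+1) ++ (cstar i).drop (τ+1) := (List.take_append_drop _ _).symm
          _ = (cstar j).take (τ+1) ++ (cstar j).drop (τ+1) := by rw [h1, h2, hdrop]
          _ = cstar j := List.take_append_drop _ _
      have hpfS : ∀ u ∈ S, ∀ v ∈ S, u <+: v → u = v := by
        intro u hu v hv hp
        rcases Finset.mem_image.1 hu with ⟨i, hi, rfl⟩
        rcases Finset.mem_image.1 hv with ⟨j, hj, rfl⟩
        have h1 := (hmemdeep i hi).2
        have h2 := (hmemdeep j hj).2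
        have hp' : cstar i <+: cstar j := by
          conv_lhs => rw [← List.take_append_drop (τ+1) (cstar i)]
          conv_rhs => rw [← List.take_append_drop (τ+1) (cstar j)]
          rw [h1, h2]
          exact (List.prefix_append_right_inj ρ).2 hp
        rw [hpf i j hp']
      have hkS := kraft (S.sup List.length) S (fun w hw => Finset.le_sup hw) hpfS
      have hsum_eq : ∑ i ∈ (T ρ).filter (fun i => d i + 2 ≤ D), ((2:ℝ) ^ (e i))⁻¹
          = ∑ w ∈ S, ((2:ℝ) ^ (w.length + 2))⁻¹ := by
        rw [hS, Finset.sum_image hinjS]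
        apply Finset.sum_congr rfl
        intro i hi
        have hdeep := (hmemdeep i hi).1
        have hshort := (Finset.mem_filter.1 hi).2
        have hei : e i = d i + 2 - (τ+1) := by simp only [he]; rw [if_pos hshort]
        have hlen : ((cstar i).drop (τ+1)).length = d i - (τ+1) := by
          simp only [List.length_drop]; rfl
        rw [hei, hlen]
        congr 2
        omega
      rw [hsum_eq]
      have : ∑ w ∈ S, ((2:ℝ) ^ (w.length + 2))⁻¹ = (∑ w ∈ S, ((2:ℝ) ^ w.length)⁻¹) / 4 := by
        rw [Finset.sum_div]
        apply Finset.sum_congr rfl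
        intro w _
        rw [pow_add]
        norm_num
        ring
      rw [this]
      linarith
    have hsnap : ∑ i ∈ (T ρ).filter (fun i => ¬ (d i + 2 ≤ D)), ((2:ℝ) ^ (e i))⁻¹ ≤ 1/4 := by
      have hcard : ((T ρ).filter (fun i => ¬ (d i + 2 ≤ D))).card ≤ σ := by
        calc ((T ρ).filter (fun i => ¬ (d i + 2 ≤ D))).card ≤ (Finset.univ : Finset (Fin σ)).card :=
              Finset.card_le_card (Finset.filter_subset _ _ |>.trans (by simp [hT, Finset.filter_subset]))
        _ = σ := by simp
      have heach : ∀ i ∈ (T ρ).filter (fun i => ¬ (d i + 2 ≤ D)), ((2:ℝ) ^ (e i))⁻¹ = ((2:ℝ) ^ (L₀+2))⁻¹ := by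
        intro i hi
        have := (Finset.mem_filter.1 hi).2
        simp only [he]
        rw [if_neg this]
      rw [Finset.sum_congr rfl heach]
      rw [Finset.sum_const]
      have hσr : (σ : ℝ) ≤ 2 ^ L₀ := by exact_mod_cast hL
      have : (((T ρ).filter (fun i => ¬ (d i + 2 ≤ D))).card : ℝ) ≤ 2 ^ L₀ := by
        calc (((T ρ).filter (fun i => ¬ (d i + 2 ≤ D))).card : ℝ) ≤ (σ:ℝ) := by exact_mod_cast hcard
          _ ≤ 2 ^ L₀ := hσr
      rw [nsmul_eq_mul]
      calc (((T ρ).filter (fun i => ¬ (d i + 2 ≤ D))).card : ℝ) * ((2:ℝ) ^ (L₀+2))⁻¹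
          ≤ (2:ℝ) ^ L₀ * ((2:ℝ) ^ (L₀+2))⁻¹ := by
            apply mul_le_mul_of_nonneg_right this (by positivity)
        _ = 1/4 := by
            rw [pow_add]
            field_simp
            norm_num
    linarith
  set W : List Bool → (Fin σ → List Bool) :=
    fun ρ => Classical.choose (gm σ (T ρ) e (hkraft ρ)) with hW
  have hWspec : ∀ ρ, (∀ i ∈ T ρ, ((W ρ) i).length = e i) ∧
      (∀ i ∈ T ρ, ∀ j ∈ T ρ, i < j → lexLT ((W ρ) i) ((W ρ) j) ∧ Incomp ((W ρ) i) ((W ρ) j)) :=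
    fun ρ => Classical.choose_spec (gm σ (T ρ) e (hkraft ρ))
  set c' : Fin σ → List Bool :=
    fun i => if τ + 1 ≤ d i then r i ++ (W (r i)) i else cstar i with hc'
  have hmemT : ∀ i, τ + 1 ≤ d i → i ∈ T (r i) := by
    intro i hi
    exact Finset.mem_filter.2 ⟨Finset.mem_univ _, hi, rfl⟩
  -- lengths
  have hlen_kept : ∀ i, ¬ (τ + 1 ≤ d i) → (c' i).length = d i := by
    intro i hi
    simp only [hc']
    rw [if_neg hi]
  have hlen_deep : ∀ i, τ + 1 ≤ d i → (c' i).length = τ + 1 + e i := by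
    intro i hi
    simp only [hc']
    rw [if_pos hi]
    rw [List.length_append, hrlen i hi, (hWspec (r i)).1 i (hmemT i hi)]
  -- incomparability helpers
  have hkr : ∀ i j, ¬ (τ+1 ≤ d i) → (τ+1 ≤ d j) → Incomp (cstar i) (r j) := by
    intro i j hki hdj
    constructor
    · intro hp
      have hp2 : cstar i <+: cstar j := hp.trans (hrpre j)
      have heq := hpf i j hp2
      have hlen : d i = d j := congrArg List.length heq
      omega
    · intro hp
      have hle := hp.length_le
      rw [hrlen j hdj] at hle
      have : τ + 1 ≤ d i := hle
      omega
  have hrr : ∀ i j, (τ+1 ≤ d i) → (τ+1 ≤ d j) → r i ≠ r j → Incomp (r i) (r j) := by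
    intro i j hdi hdj hne
    exact incomp_of_length_eq (by rw [hrlen i hdi, hrlen j hdj]) hne
  have hlexr : ∀ i j, (τ+1 ≤ d i) → (τ+1 ≤ d j) → r i ≠ r j → i < j → lexLT (r i) (r j) := by
    intro i j hdi hdj hne hij
    have hinc := hrr i j hdi hdj hne
    have h0 : lexLT (cstar i) (cstar j) := hA.2 i j hij
    have h1 : lexLT (r i ++ (cstar i).drop (τ+1)) (r j ++ (cstar j).drop (τ+1)) := by
      have e1 : r i ++ (cstar i).drop (τ+1) = cstar i := List.take_append_drop _ _
      have e2 : r j ++ (cstar j).drop (τ+1) = cstar j := List.take_append_drop _ _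
      rw [e1, e2]; exact h0
    exact (lex_append_iff _ _ _ _ hinc).1 h1
  have hlexkr : ∀ i j, ¬ (τ+1 ≤ d i) → (τ+1 ≤ d j) → i < j → lexLT (cstar i) (r j) := by
    intro i j hki hdj hij
    have hinc := hkr i j hki hdj
    have h0 : lexLT (cstar i) (cstar j) := hA.2 i j hij
    have h1 : lexLT (cstar i ++ []) (r j ++ (cstar j).drop (τ+1)) := by
      rw [List.append_nil]
      have e2 : r j ++ (cstar j).drop (τ+1) = cstar j := List.take_append_drop _ _
      rw [e2]; exact h0
    exact (lex_append_iff _ _ _ _ hinc).1 h1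
  have hlexrk : ∀ i j, (τ+1 ≤ d i) → ¬ (τ+1 ≤ d j) → i < j → lexLT (r i) (cstar j) := by
    intro i j hdi hkj hij
    have hinc := (hkr j i hkj hdi).symm
    have h0 : lexLT (cstar i) (cstar j) := hA.2 i j hij
    have h1 : lexLT (r i ++ (cstar i).drop (τ+1)) (cstar j ++ []) := by
      rw [List.append_nil]
      have e1 : r i ++ (cstar i).drop (τ+1) = cstar i := List.take_append_drop _ _
      rw [e1]; exact h0
    exact (lex_append_iff _ _ _ _ hinc).1 h1
  -- lexicographic order of the new code
  have hlex' : ∀ i j : Fin σ, i < j → lexLT (c' i) (c' j) := by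
    intro i j hij
    by_cases hdi : τ + 1 ≤ d i <;> by_cases hdj : τ + 1 ≤ d j
    · -- both deep
      by_cases hre : r i = r j
      · have hTj : j ∈ T (r i) := by rw [hre]; exact hmemT j hdj
        have hlw := ((hWspec (r i)).2 i (hmemT i hdi) j hTj hij).1
        simp only [hc']
        rw [if_pos hdi, if_pos hdj, ← hre]
        exact lex_append_left _ hlw
      · have hinc := hrr i j hdi hdj hre
        have h2 := hlexr i j hdi hdj hre hij
        simp only [hc']
        rw [if_pos hdi, if_pos hdj]
        exact (lex_append_iff _ _ _ _ hinc).2 h2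
    · -- i deep, j kept
      have h2 := hlexrk i j hdi hdj hij
      have hinc := (hkr j i hdj hdi).symm
      simp only [hc']
      rw [if_pos hdi, if_neg hdj]
      have h3 := (lex_append_iff (r i) (cstar j) ((W (r i)) i) [] hinc).2 h2
      rw [List.append_nil] at h3
      exact h3
    · -- i kept, j deep
      have h2 := hlexkr i j hdi hdj hij
      have hinc := hkr i j hdi hdj
      simp only [hc']
      rw [if_neg hdi, if_pos hdj]
      have h3 := (lex_append_iff (cstar i) (r j) [] ((W (r j)) j) hinc).2 h2
      rw [List.append_nil] at h3
      exact h3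
    · simp only [hc']
      rw [if_neg hdi, if_neg hdj]
      exact hA.2 i j hij
  -- pairwise non-prefix
  have hnp : ∀ i j : Fin σ, i ≠ j → ¬ (c' i <+: c' j) := by
    intro i j hij
    by_cases hdi : τ + 1 ≤ d i <;> by_cases hdj : τ + 1 ≤ d j
    · by_cases hre : r i = r j
      · simp only [hc']
        rw [if_pos hdi, if_pos hdj, ← hre]
        intro hp
        have hp2 := (List.prefix_append_right_inj (r i)).1 hp
        have hTj : j ∈ T (r i) := by rw [hre]; exact hmemT j hdj
        rcases lt_or_gt_of_ne hij with h | h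
        · exact ((hWspec (r i)).2 i (hmemT i hdi) j hTj h).2.1 hp2
        · exact ((hWspec (r i)).2 j hTj i (hmemT i hdi) h).2.2 hp2
      · simp only [hc']
        rw [if_pos hdi, if_pos hdj]
        exact (incomp_append _ _ _ _ (hrr i j hdi hdj hre)).1
    · simp only [hc']
      rw [if_pos hdi, if_neg hdj]
      have hinc := (hkr j i hdj hdi).symm
      have h3 := (incomp_append (r i) (cstar j) ((W (r i)) i) [] hinc).1
      rw [List.append_nil] at h3
      exact h3
    · simp only [hc']
      rw [if_neg hdi, if_pos hdj]
      have hinc := hkr i j hdi hdj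
      have h3 := (incomp_append (cstar i) (r j) [] ((W (r j)) j) hinc).1
      rw [List.append_nil] at h3
      exact h3
    · simp only [hc']
      rw [if_neg hdi, if_neg hdj]
      exact hpfne i j hij
  refine ⟨c', ⟨?_, hlex'⟩, ?_, ?_, ?_⟩
  · -- prefix-free
    rintro u ⟨i, rfl⟩ v ⟨j, rfl⟩ hp
    by_cases hij : i = j
    · rw [hij]
    · exact absurd hp (hnp i j hij)
  · -- nat height bound
    intro i
    by_cases hdi : τ + 1 ≤ d i
    · rw [hlen_deep i hdi]
      by_cases hsi : d i + 2 ≤ D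
      · have hei : e i = d i + 2 - (τ+1) := by simp only [he]; rw [if_pos hsi]
        have : τ + 1 + e i ≤ D := by omega
        exact le_trans this (le_max_left _ _)
      · have hei : e i = L₀ + 2 := by simp only [he]; rw [if_neg hsi]
        have : τ + 1 + e i = L₀ + τ + 3 := by omega
        rw [this]
        exact le_max_right _ _
    · rw [hlen_kept i hdi]
      have : d i ≤ D := by omega
      exact le_trans this (le_max_left _ _)
  · -- pointwise expected-length bound
    intro i
    have hF0 : (0:ℝ) ≤ F := le_trans zero_le_one hF1
    by_cases hdi : τ + 1 ≤ d i
    · have hcast : (τ:ℝ) + 1 ≤ (d i : ℝ) := by exact_mod_cast hdi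
      by_cases hsi : d i + 2 ≤ D
      · have hei : e i = d i + 2 - (τ+1) := by simp only [he]; rw [if_pos hsi]
        have hlen : (c' i).length = d i + 2 := by rw [hlen_deep i hdi]; omega
        rw [hlen]
        have hFnn : (0:ℝ) ≤ F - 1 := by linarith
        have hmul : (F - 1) * ((τ:ℝ)+1) ≤ (F-1) * ((d i : ℕ) : ℝ) :=
          mul_le_mul_of_nonneg_left hcast hFnn
        push_cast
        nlinarith [hP1, hmul]
      · have hei : e i = L₀ + 2 := by simp only [he]; rw [if_neg hsi]
        have hlen : (c' i).length = L₀ + τ + 3 := by rw [hlen_deep i hdi]; omega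
        rw [hlen]
        have hmaxle : (max (τ+1) (D-1) : ℕ) ≤ d i := by
          have : D - 1 ≤ d i := by omega
          exact max_le hdi this
        have hcast2 : ((max (τ+1) (D-1) : ℕ) : ℝ) ≤ ((d i : ℕ) : ℝ) := by exact_mod_cast hmaxle
        have hmul : F * ((max (τ+1) (D-1) : ℕ) : ℝ) ≤ F * ((d i : ℕ) : ℝ) :=
          mul_le_mul_of_nonneg_left hcast2 hF0
        have hcasteq : ((L₀ + τ + 3 : ℕ) : ℝ) = (L₀:ℝ) + (τ:ℝ) + 3 := by push_cast; ring
        have hgoal : ((L₀ + τ + 3 : ℕ) : ℝ) ≤ F * ((d i : ℕ) : ℝ) := by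
          rw [hcasteq]
          exact le_trans hP2 hmul
        exact hgoal
    · rw [hlen_kept i hdi]
      have : (0:ℝ) ≤ (d i : ℝ) := Nat.cast_nonneg _
      nlinarith [hF1]
  · -- balance
    have hsnaplen : ∀ k, D < (c' k).length → (c' k).length = L₀ + τ + 3 := by
      intro k hk
      by_cases hdk : τ + 1 ≤ d k
      · by_cases hsk : d k + 2 ≤ D
        · exfalso
          have hei : e k = d k + 2 - (τ+1) := by simp only [he]; rw [if_pos hsk]
          rw [hlen_deep k hdk] at hk
          omega
        · have hei : e k = L₀ + 2 := by simp only [he]; rw [if_neg hsk]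
          rw [hlen_deep k hdk]
          omega
      · exfalso
        rw [hlen_kept k hdk] at hk
        omega
    intro i j hDi hDj htake
    by_cases hij : i = j
    · rw [hij]; omega
    · by_cases hIi : (c' i).length = D
      · exfalso
        have hp : c' i <+: c' j := by
          have h1 : (c' i).take D = c' i := by
            rw [← hIi]; exact List.take_length
          rw [← h1, htake]
          exact List.take_prefix _ _
        exact hnp i j hij hp
      · by_cases hIj : (c' j).length = D
        · exfalso
          have hp : c' j <+: c' i := by
            have h1 : (c' j).take D = c' j := by
              rw [← hIj]; exact List.take_length
            rw [← h1, ← htake]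
            exact List.take_prefix _ _
          exact hnp j i (Ne.symm hij) hp
        · have h1 := hsnaplen i (lt_of_le_of_ne hDi (Ne.symm hIi))
          have h2 := hsnaplen j (lt_of_le_of_ne hDj (Ne.symm hIj))
          omega


/-- Bridge: nat power bounds to logb bounds. -/
lemma le_logb_of_pow_le {σ k : ℕ} (h : 2 ^ k ≤ σ) : (k:ℝ) ≤ Real.logb 2 σ := by
  have h0 : (0:ℝ) < 2 ^ (k:ℝ) := Real.rpow_pos_of_pos (by norm_num) _
  have hcast : ((2:ℝ) ^ (k:ℝ)) ≤ (σ:ℝ) := by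
    rw [Real.rpow_natCast]
    exact_mod_cast h
  have := (Real.logb_le_logb (by norm_num : (1:ℝ) < 2) h0 (lt_of_lt_of_le h0 hcast)).2 hcast
  rwa [Real.logb_rpow (by norm_num) (by norm_num)] at this

lemma lt_logb_of_pow_lt {σ k : ℕ} (h : 2 ^ k < σ) : (k:ℝ) < Real.logb 2 σ := by
  have h0 : (0:ℝ) < 2 ^ (k:ℝ) := Real.rpow_pos_of_pos (by norm_num) _
  have hcast : ((2:ℝ) ^ (k:ℝ)) < (σ:ℝ) := by
    rw [Real.rpow_natCast]
    exact_mod_cast h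
  have := Real.logb_lt_logb (by norm_num : (1:ℝ) < 2) h0 hcast
  rwa [Real.logb_rpow (by norm_num) (by norm_num)] at this

lemma logb_le_of_le_pow {σ k : ℕ} (hσ : 1 ≤ σ) (h : σ ≤ 2 ^ k) : Real.logb 2 σ ≤ (k:ℝ) := by
  have h0 : (0:ℝ) < (σ:ℝ) := by exact_mod_cast hσ
  have hcast : (σ:ℝ) ≤ ((2:ℝ) ^ (k:ℝ)) := by
    rw [Real.rpow_natCast]
    exact_mod_cast h
  have := (Real.logb_le_logb (by norm_num : (1:ℝ) < 2) h0 (Real.rpow_pos_of_pos (by norm_num) _)).2 hcast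
  rwa [Real.logb_rpow (by norm_num) (by norm_num)] at this

lemma logb_lt_of_lt_pow {σ k : ℕ} (hσ : 1 ≤ σ) (h : σ < 2 ^ k) : Real.logb 2 σ < (k:ℝ) := by
  have h0 : (0:ℝ) < (σ:ℝ) := by exact_mod_cast hσ
  have hcast : (σ:ℝ) < ((2:ℝ) ^ (k:ℝ)) := by
    rw [Real.rpow_natCast]
    exact_mod_cast h
  have := Real.logb_lt_logb (by norm_num : (1:ℝ) < 2) h0 hcast
  rwa [Real.logb_rpow (by norm_num) (by norm_num)] at this


lemma gmcode (σ : ℕ) (ℓ : ℕ) (h : σ ≤ 2 ^ ℓ) :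
    ∃ c : Fin σ → List Bool, AlphabeticCode σ c ∧ ∀ i, (c i).length = ℓ + 1 := by
  have hk : ∑ _i ∈ (Finset.univ : Finset (Fin σ)), ((2:ℝ) ^ (ℓ+1))⁻¹ ≤ 1/2 := by
    rw [Finset.sum_const, Finset.card_univ, Fintype.card_fin, nsmul_eq_mul]
    have hσr : (σ:ℝ) ≤ 2 ^ ℓ := by exact_mod_cast h
    calc (σ:ℝ) * ((2:ℝ) ^ (ℓ+1))⁻¹ ≤ (2:ℝ) ^ ℓ * ((2:ℝ) ^ (ℓ+1))⁻¹ := by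
          apply mul_le_mul_of_nonneg_right hσr (by positivity)
      _ = 1/2 := by rw [pow_succ]; field_simp
  obtain ⟨w, hwlen, hword⟩ := gm σ Finset.univ (fun _ => ℓ+1) hk
  refine ⟨w, ⟨?_, ?_⟩, fun i => hwlen i (Finset.mem_univ _)⟩
  · rintro x ⟨i, rfl⟩ y ⟨j, rfl⟩ hp
    by_cases hij : i = j
    · rw [hij]
    · rcases lt_or_gt_of_ne hij with hlt | hlt
      · exact absurd hp ((hword i (Finset.mem_univ _) j (Finset.mem_univ _) hlt).2.1)
      · exact absurd hp ((hword j (Finset.mem_univ _) i (Finset.mem_univ _) hlt).2.2)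
  · intro i j hij
    exact (hword i (Finset.mem_univ _) j (Finset.mem_univ _) hij).1

lemma alph_len_pos (σ : ℕ) (hσ2 : 2 ≤ σ) (c : Fin σ → List Bool)
    (h : AlphabeticCode σ c) : ∀ i, 1 ≤ (c i).length := by
  have hpf : ∀ i j : Fin σ, c i <+: c j → c i = c j := by
    intro i j hp; exact h.1 _ ⟨i, rfl⟩ _ ⟨j, rfl⟩ hp
  have hinj : ∀ i j : Fin σ, i ≠ j → c i ≠ c j := by
    intro i j hne
    rcases lt_or_gt_of_ne hne with hl | hl
    · exact lexLT_ne (h.2 i j hl)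
    · exact (lexLT_ne (h.2 j i hl)).symm
  intro i
  by_contra hcon
  push_neg at hcon
  have hnil : c i = [] := List.length_eq_zero_iff.1 (by omega)
  haveI : Nontrivial (Fin σ) := Fin.nontrivial_iff_two_le.2 hσ2
  obtain ⟨j, hj⟩ := exists_ne i
  exact hj ((hinj j i hj) (hpf i j (hnil ▸ List.nil_prefix)).symm).elim


set_option maxHeartbeats 2000000 in
lemma key (σ : ℕ) (hσ2 : 2 ≤ σ) (t u : ℝ) (s D L₀ : ℕ) (F : ℝ)
    (hFdef : F = (1 + 1 / (s : ℝ)) * ((t + u + 3) / (D : ℝ)))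
    (hu2 : u ^ 2 = t) (hu0 : 0 ≤ u)
    (hsu : u ≤ (s:ℝ)) (hs' : (s:ℝ) < u + 1)
    (hDl : t - u ≤ (D:ℝ)) (hD' : (D:ℝ) < t - u + 1)
    (hLpow : σ ≤ 2 ^ L₀) (hLt : (L₀:ℝ) ≤ t + 1)
    (ht2 : (2:ℝ) ≤ t)
    (hbr1 : σ ≤ 16 → t ≤ 4) (hbr2 : 16 < σ → 4 < t)
    (hbr3 : σ ≤ 255 → t < 8) (hbr4 : 255 < σ → 8 ≤ t)
    (hbr5 : 8 < σ → 3 < t) (hbr6 : σ ≤ 8 → L₀ ≤ 3) (hbr7 : σ ≤ 16 → L₀ ≤ 4)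
    (cstar : Fin σ → List Bool) (hcstar : AlphabeticCode σ cstar) :
    ∃ c' : Fin σ → List Bool, AlphabeticCode σ c' ∧
      (∀ i, ((c' i).length : ℝ) ≤ t + u + 3) ∧
      (∀ i, ((c' i).length : ℝ) ≤ F * ((cstar i).length : ℝ)) ∧
      (∀ i j : Fin σ, D ≤ (c' i).length → D ≤ (c' j).length →
        (c' i).take D = (c' j).take D →
        (c' i).length ≤ (c' j).length + 1) := by
  classical
  have hu1 : (1:ℝ) < u := by nlinarith
  have htu : (0:ℝ) < t - u := by nlinarith
  have hs0 : 0 < s := by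
    by_contra h
    push_neg at h
    interval_cases s
    simp at hsu
    linarith
  have hsR : (0:ℝ) < (s:ℝ) := by exact_mod_cast hs0
  have hD0 : 0 < D := by
    by_contra h
    push_neg at h
    interval_cases D
    simp at hDl
    linarith
  have hDR : (0:ℝ) < (D:ℝ) := by exact_mod_cast hD0
  have hF1 : (1:ℝ) ≤ F := by
    have h1 : (D:ℝ) ≤ t + u + 3 := by nlinarith
    have h2 : (1:ℝ) ≤ (t+u+3) / (D:ℝ) := (one_le_div hDR).2 h1
    have h3 : (1:ℝ) ≤ 1 + 1/(s:ℝ) := by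
      have : (0:ℝ) < 1/(s:ℝ) := by positivity
      linarith
    rw [hFdef]
    calc (1:ℝ) = 1 * 1 := by ring
      _ ≤ (1 + 1/(s:ℝ)) * ((t+u+3)/(D:ℝ)) := by
          apply mul_le_mul h3 h2 (by norm_num) (by linarith)
  have hF0 : (0:ℝ) ≤ F := by linarith
  have hL1R : (1:ℝ) ≤ (L₀:ℝ) := by
    have h1 : 1 ≤ L₀ := by
      by_contra h
      push_neg at h
      interval_cases L₀
      simp at hLpow
      omega
    exact_mod_cast h1
  by_cases h16 : σ ≤ 16
  · -- B1: fixed-length code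
    have ht4 : t ≤ 4 := hbr1 h16
    have hu2' : u ≤ 2 := by nlinarith
    have hsR2 : (s:ℝ) ≤ 2 := by
      have : s ≤ 2 := by
        have := Nat.ceil_le (α := ℝ) (a := u) (n := 2)
        -- avoid: just derive from hs' and integrality? s < u+1 ≤ 3 so s ≤ 2
        have hcast : (s:ℝ) < 3 := by linarith
        exact_mod_cast Nat.lt_succ_iff.1 (by exact_mod_cast (Nat.cast_lt (α := ℝ)).1 (by push_cast; linarith))
      exact_mod_cast this
    have hDR2 : (D:ℝ) ≤ 2 := by
      have hcast : (D:ℝ) < 3 := by nlinarith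
      have : D < 3 := by exact_mod_cast (Nat.cast_lt (α := ℝ)).1 (by push_cast; linarith)
      exact_mod_cast Nat.lt_succ_iff.1 this
    have hF34 : (3/4) * (t+u+3) ≤ F := by
      have h1 : (3/2 : ℝ) ≤ 1 + 1/(s:ℝ) := by
        have : (1/2 : ℝ) ≤ 1/(s:ℝ) := by
          apply one_div_le_one_div_of_le hsR hsR2
        linarith
      have h2 : (t+u+3)/2 ≤ (t+u+3)/(D:ℝ) := by
        apply div_le_div_of_nonneg_left (by linarith) hDR hDR2
      rw [hFdef]
      calc (3/4) * (t+u+3) = (3/2) * ((t+u+3)/2) := by ring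
        _ ≤ (1 + 1/(s:ℝ)) * ((t+u+3)/(D:ℝ)) := by
            apply mul_le_mul h1 h2 (by linarith) (by linarith)
    have hLF : (L₀:ℝ) + 1 ≤ F := by
      by_cases h8 : σ ≤ 8
      · have hc3 : (L₀:ℝ) ≤ 3 := by exact_mod_cast hbr6 h8
        have : (L₀:ℝ) + 1 ≤ (3/4) * (t+u+3) := by linarith
        linarith
      · have hcast : (L₀:ℝ) ≤ 4 := by exact_mod_cast hbr7 h16
        have ht3 : (3:ℝ) < t := hbr5 (by omega)
        have : (L₀:ℝ) + 1 ≤ (3/4) * (t+u+3) := by linarith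
        linarith
    obtain ⟨c', hA', hlen'⟩ := gmcode σ L₀ hLpow
    refine ⟨c', hA', ?_, ?_, ?_⟩
    · intro i
      rw [hlen' i]
      push_cast
      linarith
    · intro i
      rw [hlen' i]
      have hd1 := alph_len_pos σ hσ2 cstar hcstar i
      have hd1' : (1:ℝ) ≤ ((cstar i).length : ℝ) := by exact_mod_cast hd1
      calc ((L₀ + 1 : ℕ) : ℝ) = (L₀:ℝ) + 1 := by push_cast; ring
        _ ≤ F := hLF
        _ = F * 1 := by ring
        _ ≤ F * ((cstar i).length : ℝ) := mul_le_mul_of_nonneg_left hd1' hF0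
    · intro i j _ _ _
      rw [hlen' i, hlen' j]
      omega
  · push_neg at h16
    by_cases h255 : σ ≤ 255
    · -- B2 : τ = 0
      have ht4 : (4:ℝ) < t := hbr2 h16
      have ht8 : t < 8 := hbr3 h255
      have hu22 : (2:ℝ) < u := by clear hFdef hF1 hF0 hcstar hbr1 hbr2 hbr3 hbr4 hbr5 hbr6 hbr7 hLpow; nlinarith
      have hu28 : u ^ 2 < 8 := by clear hFdef hF1 hF0 hcstar hbr1 hbr2 hbr3 hbr4 hbr5 hbr6 hbr7 hLpow; nlinarith
      have hs3 : s = 3 := by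
        have h1 : (s:ℝ) < 4 := by clear hFdef hF1 hF0 hcstar hbr1 hbr2 hbr3 hbr4 hbr5 hbr6 hbr7 hLpow; nlinarith
        have h2 : (2:ℝ) < (s:ℝ) := by linarith
        have h3 : s < 4 := by exact_mod_cast h1
        have h4 : 2 < s := by exact_mod_cast h2
        omega
      have hD3 : 3 ≤ D := by
        have h2 : (2:ℝ) < (D:ℝ) := by clear hFdef hF1 hF0 hcstar hbr1 hbr2 hbr3 hbr4 hbr5 hbr6 hbr7 hLpow; nlinarith
        have : 2 < D := by exact_mod_cast h2
        omega
      have hD6 : D ≤ 6 := by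
        have h1 : (D:ℝ) < 7 := by clear hFdef hF1 hF0 hcstar hbr1 hbr2 hbr3 hbr4 hbr5 hbr6 hbr7 hLpow; nlinarith
        have : D < 7 := by exact_mod_cast h1
        omega
      have hDlow : (D:ℝ) - 1 < t - u := by linarith
      have hτD : 0 + 1 ≤ D := by omega
      have hFeq : F = (4/3) * ((t+u+3)/(D:ℝ)) := by
        rw [hFdef, hs3]; norm_num
      have hcases : D = 3 ∨ D = 4 ∨ D = 5 ∨ D = 6 := by omega
      have hP1' : (3:ℝ) * (D:ℝ) ≤ (4/3) * (t+u+3) := by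
        rcases hcases with h|h|h|h <;>
          (rw [h] at hDlow ⊢; push_cast at hDlow ⊢; clear hFdef hF1 hF0 hcstar hbr1 hbr2 hbr3 hbr4 hbr5 hbr6 hbr7 hLpow hFeq; nlinarith [hu22, hu28, hu2])
      have hLu : (L₀:ℝ) + 3 ≤ t + 4 := by linarith
      have hP2' : ((L₀:ℝ) + 0 + 3) * (D:ℝ) ≤ (4/3) * (t+u+3) * ((D:ℝ) - 1) := by
        have hstep : (t + 4) * (D:ℝ) ≤ (4/3) * (t+u+3) * ((D:ℝ) - 1) := by
          rcases hcases with h|h|h|h <;>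
            (rw [h] at hDlow ⊢; push_cast at hDlow ⊢; clear hFdef hF1 hF0 hcstar hbr1 hbr2 hbr3 hbr4 hbr5 hbr6 hbr7 hLpow hFeq; nlinarith [hu22, hu28, hu2])
        have : ((L₀:ℝ) + 0 + 3) * (D:ℝ) ≤ (t + 4) * (D:ℝ) := by
          apply mul_le_mul_of_nonneg_right (by linarith) (by linarith)
        linarith
      have hP1 : ((0:ℕ):ℝ) + 3 ≤ F * (((0:ℕ):ℝ) + 1) := by
        have hFe : F * (((0:ℕ):ℝ) + 1) = ((4/3) * (t+u+3)) / (D:ℝ) := by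
          rw [hFeq]; push_cast; ring
        rw [hFe, le_div_iff₀ hDR]
        push_cast
        linarith [hP1']
      have hP2 : (L₀:ℝ) + ((0:ℕ):ℝ) + 3 ≤ F * ((max (0+1) (D-1) : ℕ) : ℝ) := by
        have hmax : (max (0+1) (D-1) : ℕ) = D - 1 := by omega
        rw [hmax]
        have hDm : ((D-1:ℕ):ℝ) = (D:ℝ) - 1 := by
          rw [Nat.cast_sub (by omega)]; norm_num
        rw [hDm]
        have hFe : F * ((D:ℝ) - 1) = ((4/3) * (t+u+3) * ((D:ℝ)-1)) / (D:ℝ) := by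
          rw [hFeq]; ring
        rw [hFe, le_div_iff₀ hDR]
        push_cast
        linarith [hP2']
      obtain ⟨c', hA', hH', hPt', hbal'⟩ :=
        transform σ hσ2 cstar hcstar 0 D L₀ hLpow hτD F hF1 hP1 hP2
      refine ⟨c', hA', ?_, hPt', hbal'⟩
      intro i
      have h1 := hH' i
      have h2 : ((max D (L₀ + 0 + 3) : ℕ) : ℝ) ≤ t + u + 3 := by
        rw [Nat.cast_max]
        apply max_le
        · nlinarith
        · push_cast
          linarith
      calc ((c' i).length : ℝ) ≤ ((max D (L₀ + 0 + 3) : ℕ) : ℝ) := by exact_mod_cast h1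
        _ ≤ t + u + 3 := h2
    · -- B3
      push_neg at h255
      have ht8 : (8:ℝ) ≤ t := hbr4 h255
      have hu282 : (2.82:ℝ) ≤ u := by nlinarith
      set τ := ⌊u⌋₊ - 1 with hτdef
      have hw1 : 1 ≤ ⌊u⌋₊ := Nat.le_floor (by exact_mod_cast hu1.le)
      have hτ1 : τ + 1 = ⌊u⌋₊ := by omega
      have hwu : ((τ:ℝ) + 1) ≤ u := by
        have h1 : ((τ+1:ℕ):ℝ) ≤ u := by rw [hτ1]; exact Nat.floor_le hu0
        push_cast at h1
        linarith
      have hwl : u - 1 < ((τ:ℝ) + 1) := by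
        have h1 : u - 1 < ((τ+1:ℕ):ℝ) := by rw [hτ1]; exact Nat.sub_one_lt_floor u
        push_cast at h1
        linarith
      have hDu2 : u + 2 ≤ (D:ℝ) := by nlinarith
      have hτD : τ + 1 ≤ D := by
        have h1 : ((τ+1:ℕ):ℝ) < (D:ℝ) := by push_cast; linarith
        have := Nat.cast_lt (α := ℝ) |>.1 h1
        omega
      have hτ2D : τ + 2 ≤ D := by
        have h1 : ((τ+2:ℕ):ℝ) < (D:ℝ) := by push_cast; linarith
        have := Nat.cast_lt (α := ℝ) |>.1 h1
        omega
      have hsD : s + 1 ≤ D := by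
        have h1 : ((s+1:ℕ):ℝ) < (D:ℝ) := by push_cast; linarith
        have := Nat.cast_lt (α := ℝ) |>.1 h1
        omega
      have hDle : (D:ℝ) ≤ u^2 - u + 1 := by nlinarith
      -- hP1
      have hw0 : (0:ℝ) ≤ (τ:ℝ) + 1 := by positivity
      have hcube : (0:ℝ) ≤ u^3 + 2*u^2 - 7 := by
        nlinarith [mul_nonneg (sub_nonneg.2 hu282) (sq_nonneg u), sq_nonneg u, hu282]
      have step2 : ((τ:ℝ)+3) * (u^2-u+1) * (u+1) ≤ (u+2) * ((t+u+3) * ((τ:ℝ)+1)) := by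
        have hkey : (0:ℝ) ≤ (((τ:ℝ)+1) - (u-1)) * (3*u^2+5*u+5) := by
          apply mul_nonneg (by linarith) (by nlinarith [sq_nonneg u])
        nlinarith [hkey, hcube, hu2, hwu, hwl]
      have step1 : ((τ:ℝ)+3) * (D:ℝ) * (u+1) ≤ ((τ:ℝ)+3) * (u^2-u+1) * (u+1) := by
        have h0 : (0:ℝ) ≤ ((τ:ℝ)+3) * (u+1) := by positivity
        have := mul_le_mul_of_nonneg_left hDle h0
        nlinarith [this]
      have hpoly : ((τ:ℝ)+3) * (D:ℝ) * (u+1) ≤ (u+2) * ((t+u+3) * ((τ:ℝ)+1)) :=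
        le_trans step1 step2
      have hs1' : (1:ℝ) ≤ (u+1)/(s:ℝ) := by
        rw [le_div_iff₀ hsR]; linarith
      have hA1 : (u+2) ≤ (1 + 1/(s:ℝ)) * (u+1) := by
        have h2 : (1 + 1/(s:ℝ)) * (u+1) = (u+1) + (u+1) * (1/(s:ℝ)) := by ring
        rw [h2, mul_one_div]
        linarith [hs1']
      have hP1 : (τ:ℝ) + 3 ≤ F * ((τ:ℝ)+1) := by
        have hx : (0:ℝ) ≤ (t+u+3) * ((τ:ℝ)+1) := by
          apply mul_nonneg (by linarith) hw0
        have h2 : (u+2)*((t+u+3)*((τ:ℝ)+1)) ≤ ((1+1/(s:ℝ))*(u+1))*((t+u+3)*((τ:ℝ)+1)) :=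
          mul_le_mul_of_nonneg_right hA1 hx
        have h3 : (((τ:ℝ)+3)*(D:ℝ))*(u+1) ≤ ((1+1/(s:ℝ))*((t+u+3)*((τ:ℝ)+1)))*(u+1) := by
          nlinarith [hpoly, h2]
        have h4 : ((τ:ℝ)+3)*(D:ℝ) ≤ (1+1/(s:ℝ))*((t+u+3)*((τ:ℝ)+1)) :=
          le_of_mul_le_mul_right h3 (by linarith : (0:ℝ) < u + 1)
        have h5 : F * ((τ:ℝ)+1) = ((1+1/(s:ℝ))*((t+u+3)*((τ:ℝ)+1)))/(D:ℝ) := by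
          rw [hFdef]; ring
        rw [h5, le_div_iff₀ hDR]
        linarith [h4]
      have hmax : (max (τ+1) (D-1) : ℕ) = D - 1 := by omega
      have hDm : ((D-1:ℕ):ℝ) = (D:ℝ) - 1 := by
        rw [Nat.cast_sub (by omega)]; norm_num
      have hsD' : (s:ℝ) ≤ (D:ℝ) - 1 := by
        have h1 : ((s+1:ℕ):ℝ) ≤ ((D:ℕ):ℝ) := by exact_mod_cast hsD
        push_cast at h1; linarith
      have h6 : (D:ℝ) ≤ (1+1/(s:ℝ)) * ((D:ℝ)-1) := by
        have h7 : (1:ℝ) ≤ ((D:ℝ)-1)/(s:ℝ) := by rw [le_div_iff₀ hsR]; linarith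
        have h8 : (1 + 1/(s:ℝ)) * ((D:ℝ)-1) = ((D:ℝ)-1) + ((D:ℝ)-1)*(1/(s:ℝ)) := by ring
        rw [h8, mul_one_div]
        linarith
      have hP2 : (L₀:ℝ) + (τ:ℝ) + 3 ≤ F * ((max (τ+1) (D-1) : ℕ) : ℝ) := by
        rw [hmax, hDm]
        have hq : (0:ℝ) ≤ (t+u+3)/(D:ℝ) := by
          apply div_nonneg (by linarith) (by linarith)
        have h8 : ((t+u+3)/(D:ℝ)) * (D:ℝ) ≤ ((t+u+3)/(D:ℝ)) * ((1+1/(s:ℝ))*((D:ℝ)-1)) :=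
          mul_le_mul_of_nonneg_left h6 hq
        have h9 : ((t+u+3)/(D:ℝ)) * (D:ℝ) = t+u+3 := div_mul_cancel₀ _ (ne_of_gt hDR)
        have h10 : F * ((D:ℝ)-1) = ((t+u+3)/(D:ℝ)) * ((1+1/(s:ℝ))*((D:ℝ)-1)) := by
          rw [hFdef]; ring
        rw [h10]
        have h11 : (L₀:ℝ) + (τ:ℝ) + 3 ≤ t + u + 3 := by linarith [hLt, hwu]
        linarith [h8, h9]
      obtain ⟨c', hA', hH', hPt', hbal'⟩ :=
        transform σ hσ2 cstar hcstar τ D L₀ hLpow hτD F hF1 hP1 hP2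
      refine ⟨c', hA', ?_, hPt', hbal'⟩
      intro i
      have h1 := hH' i
      have h2 : ((max D (L₀ + τ + 3) : ℕ) : ℝ) ≤ t + u + 3 := by
        rw [Nat.cast_max]
        apply max_le
        · nlinarith [hD', hu0]
        · push_cast
          linarith [hLt, hwu]
      calc ((c' i).length : ℝ) ≤ ((max D (L₀ + τ + 3) : ℕ) : ℝ) := by exact_mod_cast h1
        _ ≤ t + u + 3 := h2


end NOBAC

/-- Theorem 1 (combinatorial content): a nearly optimal alphabetic prefix-free
code of height at most `log₂ σ + √(log₂ σ) + 3`, whose expected codeword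
length is within a factor
`(1 + 1/⌈√(log₂ σ)⌉) · (log₂ σ + √(log₂ σ) + 3)/⌈log₂ σ − √(log₂ σ)⌉`
of optimal, and whose subtrees rooted at depth `⌈log₂ σ − √(log₂ σ)⌉` are
completely balanced (codewords sharing such a prefix have lengths differing by
at most 1). -/
theorem nearly_optimal_balanced_alphabetic_code
    (σ : ℕ) (hσ : 4 ≤ σ) (p : Fin σ → ℝ)
    (hp : ∀ i, 0 ≤ p i) (hsum : ∑ i, p i = 1) :
    ∃ c : Fin σ → List Bool, AlphabeticCode σ c ∧
      (∀ i, ((c i).length : ℝ) ≤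
        Real.logb 2 σ + Real.sqrt (Real.logb 2 σ) + 3) ∧
      (∀ cstar : Fin σ → List Bool, AlphabeticCode σ cstar →
        ∑ i, p i * ((c i).length : ℝ) ≤
          (1 + 1 / (⌈Real.sqrt (Real.logb 2 σ)⌉₊ : ℝ)) *
          ((Real.logb 2 σ + Real.sqrt (Real.logb 2 σ) + 3) /
            (⌈Real.logb 2 σ - Real.sqrt (Real.logb 2 σ)⌉₊ : ℝ)) *
          ∑ i, p i * ((cstar i).length : ℝ)) ∧
      (∀ i j : Fin σ,
        ⌈Real.logb 2 σ - Real.sqrt (Real.logb 2 σ)⌉₊ ≤ (c i).length →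
        ⌈Real.logb 2 σ - Real.sqrt (Real.logb 2 σ)⌉₊ ≤ (c j).length →
        (c i).take ⌈Real.logb 2 σ - Real.sqrt (Real.logb 2 σ)⌉₊ =
          (c j).take ⌈Real.logb 2 σ - Real.sqrt (Real.logb 2 σ)⌉₊ →
        (c i).length ≤ (c j).length + 1) := by
  classical
  have hσ1 : 1 ≤ σ := by omega
  have hσ2 : 2 ≤ σ := by omega
  set t := Real.logb 2 (σ:ℝ) with htdef
  set u := Real.sqrt t with hudef
  set s := ⌈u⌉₊ with hsdef
  set D := ⌈t - u⌉₊ with hDdef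
  set F := (1 + 1 / (s : ℝ)) * ((t + u + 3) / (D : ℝ)) with hFdef
  set L₀ := Nat.clog 2 σ with hLdef
  have ht2 : (2:ℝ) ≤ t := by
    rw [htdef]
    have := NOBAC.le_logb_of_pow_le (σ := σ) (k := 2) (by omega)
    simpa using this
  have ht0 : (0:ℝ) ≤ t := by linarith
  have hu0 : (0:ℝ) ≤ u := by rw [hudef]; exact Real.sqrt_nonneg t
  have hu2 : u ^ 2 = t := by rw [hudef]; exact Real.sq_sqrt ht0
  have hu1 : (1:ℝ) ≤ u := by nlinarith
  have htu : (0:ℝ) < t - u := by nlinarith [sq_nonneg (u-1)]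
  have hsu : u ≤ (s:ℝ) := by rw [hsdef]; exact Nat.le_ceil u
  have hs' : (s:ℝ) < u + 1 := by rw [hsdef]; exact Nat.ceil_lt_add_one hu0
  have hDl : t - u ≤ (D:ℝ) := by rw [hDdef]; exact Nat.le_ceil _
  have hD' : (D:ℝ) < t - u + 1 := by rw [hDdef]; exact Nat.ceil_lt_add_one htu.le
  have hLpow : σ ≤ 2 ^ L₀ := by rw [hLdef]; exact Nat.le_pow_clog (by norm_num) σ
  have hL1 : 1 ≤ L₀ := by rw [hLdef]; exact Nat.clog_pos (by norm_num) hσ2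
  have hLt : (L₀:ℝ) ≤ t + 1 := by
    have hp' : 2 ^ (L₀ - 1) < σ := by
      rw [hLdef]
      have := Nat.pow_pred_clog_lt_self (b := 2) (by norm_num) (x := σ) (by omega)
      simpa [Nat.pred_eq_sub_one] using this
    have h2 := NOBAC.lt_logb_of_pow_lt hp'
    rw [← htdef] at h2
    have hcast : ((L₀ - 1 : ℕ) : ℝ) = (L₀:ℝ) - 1 := by
      have h3 : ((L₀ - 1 : ℕ) : ℝ) = (L₀:ℝ) - ((1:ℕ):ℝ) := Nat.cast_sub hL1
      simpa using h3
    rw [hcast] at h2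
    linarith
  have hbr1 : σ ≤ 16 → t ≤ 4 := fun h => by
    rw [htdef]
    have := NOBAC.logb_le_of_le_pow hσ1 (σ := σ) (k := 4) (by omega)
    simpa using this
  have hbr2 : 16 < σ → 4 < t := fun h => by
    rw [htdef]
    have := NOBAC.lt_logb_of_pow_lt (σ := σ) (k := 4) (by omega)
    simpa using this
  have hbr3 : σ ≤ 255 → t < 8 := fun h => by
    rw [htdef]
    have := NOBAC.logb_lt_of_lt_pow hσ1 (σ := σ) (k := 8) (by omega)
    simpa using this
  have hbr4 : 255 < σ → 8 ≤ t := fun h => by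
    rw [htdef]
    have := NOBAC.le_logb_of_pow_le (σ := σ) (k := 8) (by omega)
    simpa using this
  have hbr5 : 8 < σ → 3 < t := fun h => by
    rw [htdef]
    have := NOBAC.lt_logb_of_pow_lt (σ := σ) (k := 3) (by omega)
    simpa using this
  have hbr6 : σ ≤ 8 → L₀ ≤ 3 := fun h => by
    rw [hLdef]
    exact (Nat.clog_le_iff_le_pow (by norm_num)).2 (by omega)
  have hbr7 : σ ≤ 16 → L₀ ≤ 4 := fun h => by
    rw [hLdef]
    exact (Nat.clog_le_iff_le_pow (by norm_num)).2 (by omega)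
  set N := ⌊t + u + 3⌋₊ with hNdef
  have hB0 : (0:ℝ) ≤ t + u + 3 := by linarith
  have hNt : (N:ℝ) ≤ t + u + 3 := by rw [hNdef]; exact Nat.floor_le hB0
  obtain ⟨c₀, hc₀A, hc₀len⟩ := NOBAC.gmcode σ L₀ hLpow
  have hc₀N : L₀ + 1 ≤ N := by
    rw [hNdef]
    apply Nat.le_floor
    push_cast
    linarith
  set V := Finset.univ.filter
    (fun v : Fin σ → Fin (N+1) => ∃ c : Fin σ → List Bool, AlphabeticCode σ c ∧
      (∀ i, (c i).length = (v i : ℕ)) ∧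
      (∀ i j : Fin σ, D ≤ (c i).length → D ≤ (c j).length →
        (c i).take D = (c j).take D → (c i).length ≤ (c j).length + 1)) with hVdef
  have hv₀ : (fun _ => (⟨L₀ + 1, by omega⟩ : Fin (N+1))) ∈ V := by
    rw [hVdef]
    refine Finset.mem_filter.2 ⟨Finset.mem_univ _, c₀, hc₀A, fun i => by simp [hc₀len i], ?_⟩
    intro i j _ _ _
    rw [hc₀len i, hc₀len j]
    omega
  obtain ⟨vh, hvhV, hmin⟩ := Finset.exists_min_image V
    (fun v => ∑ i, p i * ((v i : ℕ):ℝ)) ⟨_, hv₀⟩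
  obtain ⟨ch, hchA, hchlen, hchbal⟩ := (Finset.mem_filter.1 (hVdef ▸ hvhV)).2
  refine ⟨ch, hchA, ?_, ?_, hchbal⟩
  · intro i
    rw [hchlen i]
    have h1 : (vh i : ℕ) ≤ N := Nat.lt_succ_iff.1 (vh i).isLt
    calc ((vh i : ℕ):ℝ) ≤ (N:ℝ) := by exact_mod_cast h1
      _ ≤ t + u + 3 := hNt
  · intro cstar hcstar
    obtain ⟨c', hA', hH', hPt', hbal'⟩ := NOBAC.key σ hσ2 t u s D L₀ F hFdef hu2 hu0
      hsu hs' hDl hD' hLpow hLt ht2 hbr1 hbr2 hbr3 hbr4 hbr5 hbr6 hbr7 cstar hcstar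
    have hlenN : ∀ i, (c' i).length ≤ N := fun i => by
      rw [hNdef]; exact Nat.le_floor (hH' i)
    have hv' : (fun i => (⟨(c' i).length, Nat.lt_succ_of_le (hlenN i)⟩ : Fin (N+1))) ∈ V := by
      rw [hVdef]
      exact Finset.mem_filter.2 ⟨Finset.mem_univ _, c', hA', fun i => rfl, hbal'⟩
    have hstep := hmin _ hv'
    calc ∑ i, p i * ((ch i).length:ℝ)
        = ∑ i, p i * ((vh i : ℕ):ℝ) := by
          apply Finset.sum_congr rfl
          intro i _
          rw [hchlen i]
      _ ≤ ∑ i, p i * ((c' i).length:ℝ) := hstep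
      _ ≤ ∑ i, p i * (F * ((cstar i).length:ℝ)) := by
          apply Finset.sum_le_sum
          intro i _
          exact mul_le_mul_of_nonneg_left (hPt' i) (hp i)
      _ = F * ∑ i, p i * ((cstar i).length:ℝ) := by
          rw [Finset.mul_sum]
          apply Finset.sum_congr rfl
          intro i _
          ring
end

section
/- Let C be a finite nonempty complete prefix-free set of bit strings, let d ≥ 1, and let v be a length-d prefix of some element of C. Let r_v be the number of length-d prefixes x of elements of C such that reverse(x) is lexicographically less than or equal to reverse(v), and let nodes(d) be the number of distinct length-d prefixes of elements of C. Then v ends in 0 if and only if r_v ≤ nodes(d)/2. -/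
/-- Lexicographic (non-strict) order on bit strings. -/
def lexLE (x y : List Bool) : Prop := lexLT x y ∨ x = y

/-- A finite set of bit strings is complete prefix-free if no element is a
proper prefix of another and, for every proper prefix `u` of an element, both
`u ++ [0]` and `u ++ [1]` are prefixes of elements. -/
def CompletePrefixFree (C : Finset (List Bool)) : Prop :=
  (∀ u ∈ C, ∀ v ∈ C, u <+: v → u = v) ∧
  ∀ u : List Bool, (∃ w ∈ C, u <+: w ∧ u ≠ w) →
    (∃ w ∈ C, u ++ [false] <+: w) ∧ (∃ w ∈ C, u ++ [true] <+: w)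

/-- `nodes C d`: number of distinct length-`d` prefixes of elements of `C`
(nodes at depth `d` of the code tree). -/
noncomputable def nodes (C : Finset (List Bool)) (d : ℕ) : ℕ :=
  {x : List Bool | x.length = d ∧ ∃ w ∈ C, x <+: w}.ncard

/-- `rankRev C v`: rank of the node `v` among the nodes at its depth, ordered
by the lexicographic order of their reversed path labels. -/
noncomputable def rankRev (C : Finset (List Bool)) (v : List Bool) : ℕ :=
  {x : List Bool | x.length = v.length ∧ (∃ w ∈ C, x <+: w) ∧
    lexLE x.reverse v.reverse}.ncard

lemma not_lexLE_ts (a m : List Bool) : ¬ lexLE (true :: a) (false :: m) := by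
  rintro (h | h)
  · cases h with
    | rel h => simp [Bool.lt_iff] at h
  · simp at h

lemma lexLE_st (a m : List Bool) : lexLE (false :: a) (true :: m) :=
  Or.inl (List.Lex.rel (by decide))

/-- A node at depth `d ≥ 1` is a left child (its path label ends in 0) if and
only if its reverse-lexicographic rank is at most `nodes(d)/2`. -/
theorem left_child_iff_rank_at_most_half
    (C : Finset (List Bool)) (hne : C.Nonempty) (hC : CompletePrefixFree C)
    (d : ℕ) (hd : 1 ≤ d)
    (v : List Bool) (hv : v.length = d) (hvpre : ∃ w ∈ C, v <+: w) :
    v.getLast? = some false ↔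
      (rankRev C v : ℚ) ≤ (nodes C d : ℚ) / 2 := by
  classical
  set S : Set (List Bool) := {x : List Bool | x.length = d ∧ ∃ w ∈ C, x <+: w} with hS
  -- finiteness
  have hSfin : S.Finite := by
    apply Set.Finite.subset (C.biUnion fun w => w.inits.toFinset).finite_toSet
    rintro x ⟨-, w, hw, hpre⟩
    simp only [Finset.coe_biUnion, Set.mem_iUnion, Finset.mem_coe, List.coe_toFinset,
      Set.mem_setOf_eq]
    exact ⟨w, hw, (List.mem_inits _ _).2 hpre⟩
  -- every node of S decomposes
  have hdecomp : ∀ x ∈ S, ∃ u : List Bool, u.length + 1 = d ∧ (x = u ++ [false] ∨ x = u ++ [true]) := by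
    rintro x ⟨hlen, -⟩
    have hxne : x ≠ [] := by
      intro h; rw [h] at hlen; simp at hlen; omega
    refine ⟨x.dropLast, ?_, ?_⟩
    · rw [List.length_dropLast, hlen]; omega
    · have := List.dropLast_append_getLast hxne
      cases hb : x.getLast hxne with
      | false => left; conv_lhs => rw [← this, hb]
      | true => right; conv_lhs => rw [← this, hb]
  -- sibling closure
  have hsib : ∀ u : List Bool, ∀ b : Bool, u ++ [b] ∈ S → ∀ c : Bool, u ++ [c] ∈ S := by
    rintro u b ⟨hlen, w, hw, hpre⟩ c
    have hulen : u <+: w := (List.prefix_append u [b]).trans hpre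
    have hune : u ≠ w := by
      intro h
      have h1 : (u ++ [b]).length ≤ w.length := hpre.length_le
      simp [← h] at h1
    obtain ⟨h0, h1⟩ := hC.2 u ⟨w, hw, hulen, hune⟩
    have hlen' : (u ++ [c]).length = d := by simpa using hlen
    cases c with
    | false => exact ⟨hlen', h0⟩
    | true => exact ⟨hlen', h1⟩
  set Z : Set (List Bool) := {x ∈ S | x.getLast? = some false} with hZ
  set O : Set (List Bool) := {x ∈ S | x.getLast? = some true} with hO
  have hZfin : Z.Finite := hSfin.subset (fun x hx => hx.1)
  have hOfin : O.Finite := hSfin.subset (fun x hx => hx.1)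
  -- characterizations
  have hZmem : ∀ u : List Bool, u ++ [false] ∈ Z ↔ u ++ [false] ∈ S := by
    intro u; constructor
    · exact fun h => h.1
    · exact fun h => ⟨h, by simp⟩
  have hOmem : ∀ u : List Bool, u ++ [true] ∈ O ↔ u ++ [true] ∈ S := by
    intro u; constructor
    · exact fun h => h.1
    · exact fun h => ⟨h, by simp⟩
  -- the flip bijection: image of Z under (·.dropLast ++ [true]) is O
  have himg : (fun x : List Bool => x.dropLast ++ [true]) '' Z = O := by
    ext y; constructor
    · rintro ⟨x, hx, rfl⟩
      obtain ⟨u, -, hxu | hxu⟩ := hdecomp x hx.1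
      · subst hxu
        simp only [List.dropLast_concat]
        exact (hOmem u).2 (hsib u false hx.1 true)
      · subst hxu
        exact absurd hx.2 (by simp)
    · intro hy
      obtain ⟨u, -, hyu | hyu⟩ := hdecomp y hy.1
      · subst hyu; exact absurd hy.2 (by simp)
      · subst hyu
        exact ⟨u ++ [false], (hZmem u).2 (hsib u true hy.1 false), by simp⟩
  have hinj : Set.InjOn (fun x : List Bool => x.dropLast ++ [true]) Z := by
    rintro x hx y hy hxy
    obtain ⟨u, -, hxu | hxu⟩ := hdecomp x hx.1
    · obtain ⟨u', -, hyu | hyu⟩ := hdecomp y hy.1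
      · subst hxu; subst hyu; simp only [List.dropLast_concat] at hxy
        simp at hxy; rw [hxy]
      · subst hyu; exact absurd hy.2 (by simp)
    · subst hxu; exact absurd hx.2 (by simp)
  have hZO : Z.ncard = O.ncard := by
    rw [← himg, Set.ncard_image_of_injOn hinj]
  -- S = Z ∪ O disjointly
  have hScard : nodes C d = Z.ncard + O.ncard := by
    have hunion : S = Z ∪ O := by
      ext x; constructor
      · intro hx
        obtain ⟨u, -, hxu | hxu⟩ := hdecomp x hx
        · left; subst hxu; exact ⟨hx, by simp⟩
        · right; subst hxu; exact ⟨hx, by simp⟩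
      · rintro (hx | hx) <;> exact hx.1
    have hdisj : Disjoint Z O := by
      rw [Set.disjoint_left]
      rintro x ⟨-, h0⟩ ⟨-, h1⟩
      rw [h0] at h1; simp at h1
    rw [nodes, ← hS, hunion, Set.ncard_union_eq hdisj hZfin hOfin]
  -- rank set
  set R : Set (List Bool) := {x : List Bool | x.length = v.length ∧ (∃ w ∈ C, x <+: w) ∧
    lexLE x.reverse v.reverse} with hR
  have hRS : R ⊆ S := by
    rintro x ⟨h1, h2, -⟩
    exact ⟨by rw [h1, hv], h2⟩
  have hRfin : R.Finite := hSfin.subset hRS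
  have hvS : v ∈ S := ⟨hv, hvpre⟩
  obtain ⟨p, -, hvp | hvp⟩ := hdecomp v hvS
  · -- v ends in false
    have hgl : v.getLast? = some false := by rw [hvp]; simp
    rw [hgl]
    simp only [true_iff]
    have hRZ : R ⊆ Z := by
      rintro x hx
      obtain ⟨u, -, hxu | hxu⟩ := hdecomp x (hRS hx)
      · exact ⟨hRS hx, by rw [hxu]; simp⟩
      · exfalso
        have hle := hx.2.2
        rw [hxu, hvp] at hle
        simp only [List.reverse_append, List.reverse_singleton, List.singleton_append] at hle
        exact not_lexLE_ts _ _ hle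
    have h1 : rankRev C v ≤ Z.ncard := by
      rw [rankRev]; exact Set.ncard_le_ncard hRZ hZfin
    have h2 : nodes C d = 2 * Z.ncard := by rw [hScard, hZO]; ring
    have h3 : (rankRev C v : ℚ) ≤ (Z.ncard : ℚ) := by exact_mod_cast h1
    rw [h2]; push_cast; linarith
  · -- v ends in true
    have hgl : v.getLast? = some true := by rw [hvp]; simp
    have hvZ : v ∉ Z := by
      rintro ⟨-, h⟩; rw [hgl] at h; simp at h
    have hsub : insert v Z ⊆ R := by
      rintro x (rfl | hx)
      · exact ⟨rfl, hvpre, Or.inr rfl⟩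
      · refine ⟨by rw [hx.1.1, hv], hx.1.2, ?_⟩
        obtain ⟨u, -, hxu | hxu⟩ := hdecomp x hx.1
        · rw [hxu, hvp]
          simp only [List.reverse_append, List.reverse_singleton, List.singleton_append]
          exact lexLE_st _ _
        · exfalso; have := hx.2; rw [hxu] at this; simp at this
    have h1 : Z.ncard + 1 ≤ rankRev C v := by
      rw [rankRev]
      calc Z.ncard + 1 = (insert v Z).ncard := (Set.ncard_insert_of_notMem hvZ hZfin).symm
        _ ≤ R.ncard := Set.ncard_le_ncard hsub hRfin
    have h2 : nodes C d = 2 * Z.ncard := by rw [hScard, hZO]; ring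
    have hlt : ¬ ((rankRev C v : ℚ) ≤ (nodes C d : ℚ) / 2) := by
      rw [h2]
      have h3 : (Z.ncard : ℚ) + 1 ≤ (rankRev C v : ℚ) := by exact_mod_cast h1
      push_cast
      intro h; linarith
    rw [hgl]
    simp [hlt]
end

section
/- Let C be a finite complete prefix-free set of bit strings with the wavelet-matrix property. Then for every d, every w ∈ C with |w| = d, and every bit string u of length d that is a proper prefix of some element of C, reverse(w) is lexicographically strictly less than reverse(u). -/
/-- The wavelet-matrix property: codeword lengths are non-decreasing when the
codewords are arranged so that their reverses are in lexicographic order. -/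
def WaveletMatrixProp (C : Finset (List Bool)) : Prop :=
  ∀ w₁ ∈ C, ∀ w₂ ∈ C, lexLE w₁.reverse w₂.reverse → w₁.length ≤ w₂.length


/-- Prepending a `false` to the longer list preserves strict lex order. -/
lemma lexLT_cons_false {a b : List Bool} (hlen : b.length ≤ a.length)
    (h : List.Lex (· < ·) a b) : List.Lex (· < ·) (false :: a) b := by
  induction a generalizing b with
  | nil =>
    cases b with
    | nil => exact absurd h (by intro h; cases h)
    | cons c t => simp at hlen
  | cons a0 a' ih =>
    cases b with
    | nil => exact absurd h (by intro h; cases h)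
    | cons b0 b' =>
      cases b0 with
      | true =>
        exact List.Lex.rel (by simp)
      | false =>
        have ha0 : a0 = false := by
          cases a0 with
          | false => rfl
          | true => cases h with
            | rel h => exact absurd h (by decide)
        subst ha0
        have h' : List.Lex (· < ·) a' b' := by
          cases h with
          | cons h => exact h
          | rel h => exact absurd h (by decide)
        have hlen' : b'.length ≤ a'.length := by simpa using hlen
        exact List.Lex.cons (ih hlen' h')

/-- Prepending any number of `false`s to the longer list preserves strict lex order. -/
lemma lexLT_replicate_false {a b : List Bool} (k : ℕ) (hlen : b.length ≤ a.length)
    (h : List.Lex (· < ·) a b) :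
    List.Lex (· < ·) (List.replicate k false ++ a) b := by
  induction k with
  | zero => simpa using h
  | succ k ih =>
    rw [List.replicate_succ, List.cons_append]
    exact lexLT_cons_false (by simp; omega) ih

/-- Any strict prefix of a codeword extends by all-`false`s to a codeword. -/
lemma exists_allFalse_ext (C : Finset (List Bool)) (hC : CompletePrefixFree C) :
    ∀ fuel : ℕ, ∀ u : List Bool, (∀ w ∈ C, w.length ≤ u.length + fuel) →
    (∃ w ∈ C, u <+: w ∧ u ≠ w) →
    ∃ x ∈ C, ∃ k : ℕ, 0 < k ∧ u ++ List.replicate k false = x := by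
  intro fuel
  induction fuel with
  | zero =>
    intro u hbound ⟨w, hwC, hpre, hne⟩
    have h1 : u.length < w.length := by
      rcases lt_or_eq_of_le hpre.length_le with h | h
      · exact h
      · exact absurd (List.IsPrefix.eq_of_length hpre h) hne
    have := hbound w hwC
    omega
  | succ fuel ih =>
    intro u hbound hstrict
    obtain ⟨w, hwC, hpre⟩ := (hC.2 u hstrict).1
    by_cases heq : u ++ [false] = w
    · exact ⟨w, hwC, 1, one_pos, by simpa using heq⟩
    · obtain ⟨x, hxC, k, hk, hx⟩ := ih (u ++ [false])
        (by intro w' hw'; have := hbound w' hw'; simp; omega)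
        ⟨w, hwC, hpre, heq⟩
      refine ⟨x, hxC, k + 1, by omega, ?_⟩
      rw [← hx, List.replicate_succ, List.append_assoc]
      rfl

/-- At any depth, the reversed path labels of all leaves are lexicographically
less than the reversed path labels of all internal nodes at that depth. -/
theorem leaves_before_internal_nodes
    (C : Finset (List Bool)) (hC : CompletePrefixFree C)
    (hW : WaveletMatrixProp C)
    (d : ℕ) (w : List Bool) (hw : w ∈ C) (hwl : w.length = d)
    (u : List Bool) (hu : u.length = d)
    (hupre : ∃ x ∈ C, u <+: x ∧ u ≠ x) :
    lexLT w.reverse u.reverse := by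
  -- Find an all-false extension of u that is a codeword
  obtain ⟨x, hxC, k, hk, hx⟩ := exists_allFalse_ext C hC (C.sup List.length) u
    (by intro w' hw'; have := Finset.le_sup (f := List.length) hw'; omega)
    hupre
  have hxlen : x.length = d + k := by rw [← hx]; simp [hu]
  have hxrev : x.reverse = List.replicate k false ++ u.reverse := by
    rw [← hx, List.reverse_append, List.reverse_replicate]
  -- x is strictly longer than w, so by WM, ¬ lexLE x.reverse w.reverse
  have hnotle : ¬ lexLE x.reverse w.reverse := by
    intro hle
    have := hW x hxC w hw hle
    omega
  -- trichotomy
  rcases trichotomous_of (List.Lex ((· < ·) : Bool → Bool → Prop))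
      w.reverse u.reverse with h | h | h
  · exact h
  · -- w = u : contradiction with prefix-freeness
    have hwu : w = u := List.reverse_injective h
    subst hwu
    obtain ⟨y, hyC, hpre, hne⟩ := hupre
    exact absurd (hC.1 w hw y hyC hpre) hne
  · -- u.reverse <lex w.reverse : contradiction
    exfalso
    apply hnotle
    left
    rw [hxrev]
    exact lexLT_replicate_false k (by simp [hu, hwl]) h
end

section
/- Let C be a finite complete prefix-free set of bit strings with the wavelet-matrix property. For each d let nodes(d) be the number of distinct length-d prefixes of elements of C and leaves(d) the number of elements of C of length d; for a length-d prefix v of an element of C let r_v be the number of length-d prefixes x of elements of C with reverse(x) lexicographically ≤ reverse(v). Then for every bit string u of length d that is a proper prefix of some element of C: r_{u++[0]} = r_u − leaves(d), and r_{u++[1]} = r_u − leaves(d) + nodes(d+1)/2. -/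
/-- `leaves C d`: number of codewords of length `d`. -/
def leaves (C : Finset (List Bool)) (d : ℕ) : ℕ :=
  (C.filter fun w => w.length = d).card

lemma lexLT_trichot (a b : List Bool) : lexLT a b ∨ a = b ∨ lexLT b a :=
  trichotomous_of (List.Lex (· < ·)) a b

lemma lemL : ∀ (a b : List Bool), lexLT a (false :: b) → lexLT b a → False := by
  intro a
  induction a with
  | nil => exact fun b _ h2 => List.not_lex_nil h2
  | cons a0 x ih =>
    intro b h1 h2
    cases h1 with
    | rel h => exact absurd h (by cases a0 <;> decide)
    | cons h1' =>
      cases h2 with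
      | nil => exact List.not_lex_nil h1'
      | rel h => exact absurd h (by rename_i b0 _; cases b0 <;> decide)
      | cons h2' => exact ih _ h1' h2'

lemma lemL' {a b : List Bool} (h : lexLT a (false :: b)) (hne : a ≠ b) : lexLT a b := by
  rcases lexLT_trichot a b with h1 | h1 | h1
  · exact h1
  · exact absurd h1 hne
  · exact absurd h1 (fun h2 => lemL a b h h2)

lemma rev_concat (l : List Bool) (b : Bool) : (l ++ [b]).reverse = b :: l.reverse := by simp

/-- Key structural lemma: under completeness and the "shorter codewords have
smaller reversed-lex order" property, every codeword precedes every internal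
node of the same depth in reversed-lex order. -/
lemma leaves_first : ∀ n : ℕ, ∀ C : Finset (List Bool), C.sup List.length ≤ n →
    CompletePrefixFree C →
    (∀ w₁ ∈ C, ∀ w₂ ∈ C, w₁.length < w₂.length → lexLT w₁.reverse w₂.reverse) →
    ∀ w ∈ C, ∀ y : List Bool, (∃ x ∈ C, y <+: x ∧ y ≠ x) → y.length = w.length →
    lexLT w.reverse y.reverse := by
  intro n
  induction n with
  | zero =>
    rintro C hsup hC hH w hw y ⟨x, hx, hpre, hne⟩ hlen
    have h1 : x.length ≤ 0 := le_trans (Finset.le_sup hx) hsup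
    have h2 : x = [] := by cases x <;> simp_all
    subst h2
    exact absurd (List.prefix_nil.mp hpre) hne
  | succ n ih =>
    rintro C hsup hC hH w hw y ⟨x, hx, hpre, hne⟩ hlen
    have hylt : y.length < x.length :=
      lt_of_le_of_ne hpre.length_le (fun h => hne (hpre.eq_of_length h))
    have hxle : x.length ≤ n + 1 := le_trans (Finset.le_sup hx) hsup
    have hynotC : y ∉ C := fun hyC => hne (hC.1 y hyC x hx hpre)
    have hwny : w ≠ y := fun h => hynotC (h ▸ hw)
    by_cases hsup' : C.sup List.length ≤ n
    · exact ih C hsup' hC hH w hw y ⟨x, hx, hpre, hne⟩ hlen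
    · have hm : C.sup List.length = n + 1 := le_antisymm hsup (not_le.mp hsup')
      by_cases hd : y.length = n
      · -- top case: y's child y ++ [false] is itself a codeword
        obtain ⟨⟨z0, hz0, hz0p⟩, -⟩ := hC.2 y ⟨x, hx, hpre, hne⟩
        have hz0le : z0.length ≤ n + 1 := hm ▸ Finset.le_sup hz0
        have hz0eq : y ++ [false] = z0 := by
          apply hz0p.eq_of_length
          have h1 := hz0p.length_le
          simp at h1 ⊢
          omega
        have hwz : lexLT w.reverse z0.reverse := by
          apply hH w hw z0 hz0
          rw [← hz0eq]
          simp
          omega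
        rw [← hz0eq, rev_concat] at hwz
        exact lemL' hwz (fun h => hwny (List.reverse_injective h))
      · -- strip case : y.length < n
        have hyn : y.length < n := by omega
        set C' : Finset (List Bool) :=
          C.filter (fun z => z.length ≤ n) ∪
            (C.filter (fun z => z.length = n + 1)).image List.dropLast with hC'def
        have hmem : ∀ z, z ∈ C' ↔
            (z ∈ C ∧ z.length ≤ n) ∨ ∃ t ∈ C, t.length = n + 1 ∧ z = t.dropLast := by
          intro z
          simp only [hC'def, Finset.mem_union, Finset.mem_filter, Finset.mem_image]
          constructor
          · rintro (⟨h1, h2⟩ | ⟨t, ⟨ht1, ht2⟩, ht3⟩)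
            · exact Or.inl ⟨h1, h2⟩
            · exact Or.inr ⟨t, ht1, ht2, ht3.symm⟩
          · rintro (⟨h1, h2⟩ | ⟨t, ht1, ht2, ht3⟩)
            · exact Or.inl ⟨h1, h2⟩
            · exact Or.inr ⟨t, ⟨ht1, ht2⟩, ht3.symm⟩
        have hpair : ∀ z ∈ C, z.length = n + 1 → ∀ b : Bool, z.dropLast ++ [b] ∈ C := by
          intro z hz hzlen b
          have hdp : z.dropLast <+: z := List.dropLast_prefix z
          have hdlen : z.dropLast.length = n := by simp [hzlen]
          have hdne : z.dropLast ≠ z := by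
            intro h
            have := congrArg List.length h
            omega
          obtain ⟨h0, h1⟩ := hC.2 z.dropLast ⟨z, hz, hdp, hdne⟩
          have key : ∀ b : Bool, (∃ w' ∈ C, z.dropLast ++ [b] <+: w') →
              z.dropLast ++ [b] ∈ C := by
            rintro b ⟨w', hw', hp⟩
            have hwl : w'.length ≤ n + 1 := hm ▸ Finset.le_sup hw'
            have : z.dropLast ++ [b] = w' := by
              apply hp.eq_of_length
              have h1 := hp.length_le
              simp at h1 ⊢
              omega
            exact this ▸ hw'
          cases b
          · exact key false h0
          · exact key true h1
        have hSL : ∀ s x', x' ∈ C → s <+: x' → s.length ≤ n → ∃ x'' ∈ C', s <+: x'' := by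
          intro s x' hx' hp hslen
          by_cases hxl : x'.length ≤ n
          · exact ⟨x', (hmem x').mpr (Or.inl ⟨hx', hxl⟩), hp⟩
          · have hxl' : x'.length = n + 1 :=
              le_antisymm (hm ▸ Finset.le_sup hx') (by omega)
            refine ⟨x'.dropLast, (hmem _).mpr (Or.inr ⟨x', hx', hxl', rfl⟩), ?_⟩
            apply List.prefix_of_prefix_length_le hp (List.dropLast_prefix x')
            simp
            omega
        have hlen' : ∀ z ∈ C', z.length ≤ n := by
          intro z hz
          rcases (hmem z).mp hz with ⟨-, h⟩ | ⟨t, -, ht, rfl⟩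
          · exact h
          · simp [ht]
        have hC'c : CompletePrefixFree C' := by
          constructor
          · intro a ha b hb hab
            rcases (hmem a).mp ha with ⟨haC, hal⟩ | ⟨t, htC, htl, rfl⟩
            · rcases (hmem b).mp hb with ⟨hbC, hbl⟩ | ⟨t, htC, htl, rfl⟩
              · exact hC.1 a haC b hbC hab
              · exfalso
                have h1 : a <+: t := hab.trans (List.dropLast_prefix t)
                have h2 := hC.1 a haC t htC h1
                rw [h2] at hal
                omega
            · apply hab.eq_of_length
              have h1 := hab.length_le
              have h2 : b.length ≤ n := hlen' b hb
              simp [htl] at h1 ⊢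
              omega
          · rintro s ⟨v, hv, hsv, hsne⟩
            obtain ⟨vh, hvh, hvvh⟩ : ∃ vh ∈ C, v <+: vh := by
              rcases (hmem v).mp hv with ⟨h, -⟩ | ⟨t, htC, -, rfl⟩
              · exact ⟨v, h, List.prefix_refl v⟩
              · exact ⟨t, htC, List.dropLast_prefix t⟩
            have hslen : s.length < v.length :=
              lt_of_le_of_ne hsv.length_le (fun h => hsne (hsv.eq_of_length h))
            have hvlen : v.length ≤ n := hlen' v hv
            have hsvh : s <+: vh := hsv.trans hvvh
            have hsnevh : s ≠ vh := by
              intro h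
              have := hvvh.length_le
              rw [h] at hslen
              omega
            obtain ⟨⟨w0, hw0, hw0p⟩, ⟨w1, hw1, hw1p⟩⟩ := hC.2 s ⟨vh, hvh, hsvh, hsnevh⟩
            constructor
            · exact hSL (s ++ [false]) w0 hw0 hw0p (by simp; omega)
            · exact hSL (s ++ [true]) w1 hw1 hw1p (by simp; omega)
        have hH' : ∀ w₁ ∈ C', ∀ w₂ ∈ C', w₁.length < w₂.length →
            lexLT w₁.reverse w₂.reverse := by
          intro w₁ h1 w₂ h2 hl
          rcases (hmem w₂).mp h2 with ⟨h2C, -⟩ | ⟨t, htC, htl, rfl⟩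
          · rcases (hmem w₁).mp h1 with ⟨h1C, -⟩ | ⟨t, htC, htl, rfl⟩
            · exact hH w₁ h1C w₂ h2C hl
            · exfalso
              have := hlen' w₂ h2
              simp [htl] at hl
              omega
          · have htd : t.dropLast.length = n := by simp [htl]
            rcases (hmem w₁).mp h1 with ⟨h1C, h1l⟩ | ⟨t2, ht2C, ht2l, rfl⟩
            · have hz : t.dropLast ++ [false] ∈ C := hpair t htC htl false
              have hlt : lexLT w₁.reverse (t.dropLast ++ [false]).reverse := by
                apply hH w₁ h1C _ hz
                simp
                omega
              rw [rev_concat] at hlt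
              apply lemL' hlt
              intro h
              have := congrArg List.length h
              simp at this
              omega
            · exfalso
              simp [ht2l, htl] at hl
        have hsupC' : C'.sup List.length ≤ n := Finset.sup_le hlen'
        have hwC' : w ∈ C' := (hmem w).mpr (Or.inl ⟨hw, by omega⟩)
        have hyI' : ∃ x' ∈ C', y <+: x' ∧ y ≠ x' := by
          by_cases hxl : x.length ≤ n
          · exact ⟨x, (hmem x).mpr (Or.inl ⟨hx, hxl⟩), hpre, hne⟩
          · have hxl' : x.length = n + 1 :=
              le_antisymm (hm ▸ Finset.le_sup hx) (by omega)
            have hdl : x.dropLast.length = n := by simp [hxl']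
            refine ⟨x.dropLast, (hmem _).mpr (Or.inr ⟨x, hx, hxl', rfl⟩), ?_, ?_⟩
            · apply List.prefix_of_prefix_length_le hpre (List.dropLast_prefix x)
              omega
            · intro h
              have := congrArg List.length h
              omega
        exact ih C' hsupC' hC'c hH' w hwC' y hyI' hlen

lemma lexLE_cons {c : Bool} {a b : List Bool} (h : lexLE a b) : lexLE (c :: a) (c :: b) :=
  h.elim (fun h => Or.inl (List.Lex.cons h)) (fun h => Or.inr (by rw [h]))

lemma lexLE_cons_inv {c : Bool} {a b : List Bool} (h : lexLE (c :: a) (c :: b)) : lexLE a b := by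
  rcases h with h | h
  · exact Or.inl (List.lex_cons_iff.mp h)
  · exact Or.inr (by injection h)

lemma lexLT_false_true (a b : List Bool) : lexLT (false :: a) (true :: b) :=
  List.Lex.rel (by decide)

lemma not_lexLE_true_false (a b : List Bool) : ¬ lexLE (true :: a) (false :: b) := by
  rintro (h | h)
  · cases h with
    | rel h => exact absurd h (by decide)
  · simp at h


/-- Rank relations between an internal node `u` at depth `d` and its two
children: `r_{u0} = r_u − leaves(d)` and
`r_{u1} = r_u − leaves(d) + nodes(d+1)/2`. -/
theorem rank_of_children
    (C : Finset (List Bool)) (hC : CompletePrefixFree C)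
    (hW : WaveletMatrixProp C)
    (d : ℕ) (u : List Bool) (hu : u.length = d)
    (hupre : ∃ x ∈ C, u <+: x ∧ u ≠ x) :
    (rankRev C (u ++ [false]) : ℚ)
      = (rankRev C u : ℚ) - (leaves C d : ℚ) ∧
    (rankRev C (u ++ [true]) : ℚ)
      = (rankRev C u : ℚ) - (leaves C d : ℚ) + (nodes C (d + 1) : ℚ) / 2 := by
  classical
  subst hu
  -- shorter codewords have smaller reversed-lex rank
  have hH : ∀ w₁ ∈ C, ∀ w₂ ∈ C, w₁.length < w₂.length → lexLT w₁.reverse w₂.reverse := by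
    intro w₁ h1 w₂ h2 hlen
    rcases lexLT_trichot w₁.reverse w₂.reverse with h | h | h
    · exact h
    · have := List.reverse_injective h
      subst this
      omega
    · have := hW w₂ h2 w₁ h1 (Or.inl h)
      omega
  set P : Finset (List Bool) := C.biUnion (fun w => w.inits.toFinset) with hPdef
  have hmemP : ∀ x, x ∈ P ↔ ∃ w ∈ C, x <+: w := by
    intro x
    simp [hPdef, List.mem_inits]
  have hrank : ∀ v : List Bool, rankRev C v =
      (P.filter (fun x => x.length = v.length ∧ lexLE x.reverse v.reverse)).card := by
    intro v
    have hset : {x : List Bool | x.length = v.length ∧ (∃ w ∈ C, x <+: w) ∧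
        lexLE x.reverse v.reverse}
        = ↑(P.filter (fun x => x.length = v.length ∧ lexLE x.reverse v.reverse)) := by
      ext x
      simp only [Set.mem_setOf_eq, Finset.coe_filter, hmemP]
      tauto
    rw [rankRev, hset, Set.ncard_coe_finset]
  have hnodes : ∀ e, nodes C e = (P.filter (fun x => x.length = e)).card := by
    intro e
    have hset : {x : List Bool | x.length = e ∧ ∃ w ∈ C, x <+: w}
        = ↑(P.filter (fun x => x.length = e)) := by
      ext x
      simp only [Set.mem_setOf_eq, Finset.coe_filter, hmemP]
      tauto
    rw [nodes, hset, Set.ncard_coe_finset]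
  set I : Finset (List Bool) := P.filter (fun x => x.length = u.length ∧ x ∉ C) with hIdef
  have hmemI : ∀ y, y ∈ I ↔ (∃ w ∈ C, y <+: w ∧ y ≠ w) ∧ y.length = u.length := by
    intro y
    simp only [hIdef, Finset.mem_filter, hmemP]
    constructor
    · rintro ⟨⟨w, hw, hp⟩, hlen, hnC⟩
      exact ⟨⟨w, hw, hp, fun h => hnC (h ▸ hw)⟩, hlen⟩
    · rintro ⟨⟨w, hw, hp, hne⟩, hlen⟩
      exact ⟨⟨w, hw, hp⟩, hlen, fun hyC => hne (hC.1 y hyC w hw hp)⟩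
  set R : Finset (List Bool) := I.filter (fun y => lexLE y.reverse u.reverse) with hRdef
  have huC : u ∉ C := by
    obtain ⟨x, hx, hp, hne⟩ := hupre
    exact fun h => hne (hC.1 u h x hx hp)
  have hLF : ∀ w ∈ C, w.length = u.length → lexLT w.reverse u.reverse := by
    intro w hw hlen
    exact leaves_first (C.sup List.length) C le_rfl hC hH w hw u hupre hlen.symm
  have hinj : ∀ b : Bool, Function.Injective (fun y : List Bool => y ++ [b]) := by
    intro b a1 a2 h
    simpa using congrArg List.dropLast h
  have hchild : ∀ x, (x ∈ P ∧ x.length = u.length + 1) ↔ ∃ y ∈ I, ∃ b : Bool, x = y ++ [b] := by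
    intro x
    constructor
    · rintro ⟨hxP, hxl⟩
      obtain ⟨w, hw, hp⟩ := (hmemP x).mp hxP
      have hxne : x ≠ [] := by
        intro h
        rw [h] at hxl
        simp at hxl
      refine ⟨x.dropLast, ?_, x.getLast hxne, (List.dropLast_append_getLast hxne).symm⟩
      apply (hmemI _).mpr
      refine ⟨⟨w, hw, (List.dropLast_prefix x).trans hp, ?_⟩, by simp [hxl]⟩
      intro h
      have h1 := hp.length_le
      have h2 := congrArg List.length h
      simp at h2
      omega
    · rintro ⟨y, hy, b, rfl⟩
      obtain ⟨⟨w, hw, hp, hne⟩, hlen⟩ := (hmemI y).mp hy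
      have hcc := hC.2 y ⟨w, hw, hp, hne⟩
      have hb : ∃ w' ∈ C, y ++ [b] <+: w' := by
        cases b
        · exact hcc.1
        · exact hcc.2
      obtain ⟨w', hw', hp'⟩ := hb
      exact ⟨(hmemP _).mpr ⟨w', hw', hp'⟩, by simp [hlen]⟩
  -- G4
  have hG4 : (P.filter (fun x => x.length = u.length + 1)).card = 2 * I.card := by
    have hun : P.filter (fun x => x.length = u.length + 1)
        = I.image (fun y => y ++ [false]) ∪ I.image (fun y => y ++ [true]) := by
      ext x
      simp only [Finset.mem_filter, Finset.mem_union, Finset.mem_image]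
      constructor
      · intro hx
        obtain ⟨y, hy, b, rfl⟩ := (hchild x).mp hx
        cases b
        · exact Or.inl ⟨y, hy, rfl⟩
        · exact Or.inr ⟨y, hy, rfl⟩
      · intro hx
        apply (hchild x).mpr
        rcases hx with ⟨y, hy, rfl⟩ | ⟨y, hy, rfl⟩
        · exact ⟨y, hy, false, rfl⟩
        · exact ⟨y, hy, true, rfl⟩
    have hdisj : Disjoint (I.image (fun y => y ++ [false])) (I.image (fun y => y ++ [true])) := by
      rw [Finset.disjoint_left]
      intro x h1 h2
      rw [Finset.mem_image] at h1 h2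
      obtain ⟨y1, hy1, heq1⟩ := h1
      obtain ⟨y2, hy2, heq2⟩ := h2
      rw [← heq2] at heq1
      have := congrArg List.getLast? heq1
      simp at this
    rw [hun, Finset.card_union_of_disjoint hdisj,
      Finset.card_image_of_injective _ (hinj false),
      Finset.card_image_of_injective _ (hinj true)]
    ring
  -- G2
  have hG2 : (P.filter (fun x => x.length = (u ++ [false]).length ∧
      lexLE x.reverse (u ++ [false]).reverse)).card = R.card := by
    have hun : P.filter (fun x => x.length = (u ++ [false]).length ∧
        lexLE x.reverse (u ++ [false]).reverse) = R.image (fun y => y ++ [false]) := by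
      ext x
      simp only [Finset.mem_filter, Finset.mem_image]
      constructor
      · rintro ⟨hxP, hxl, hxle⟩
        obtain ⟨y, hy, b, rfl⟩ := (hchild x).mp ⟨hxP, by simpa using hxl⟩
        rw [rev_concat, rev_concat] at hxle
        cases b
        · refine ⟨y, ?_, rfl⟩
          rw [hRdef, Finset.mem_filter]
          exact ⟨hy, lexLE_cons_inv hxle⟩
        · exact absurd hxle (not_lexLE_true_false _ _)
      · rintro ⟨y, hyR, rfl⟩
        rw [hRdef, Finset.mem_filter] at hyR
        obtain ⟨hyI, hyle⟩ := hyR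
        obtain ⟨hmem1, hlen1⟩ := (hchild (y ++ [false])).mpr ⟨y, hyI, false, rfl⟩
        refine ⟨hmem1, by simp [hlen1], ?_⟩
        rw [rev_concat, rev_concat]
        exact lexLE_cons hyle
    rw [hun, Finset.card_image_of_injective _ (hinj false)]
  -- G3
  have hG3 : (P.filter (fun x => x.length = (u ++ [true]).length ∧
      lexLE x.reverse (u ++ [true]).reverse)).card = I.card + R.card := by
    have hun : P.filter (fun x => x.length = (u ++ [true]).length ∧
        lexLE x.reverse (u ++ [true]).reverse)
        = I.image (fun y => y ++ [false]) ∪ R.image (fun y => y ++ [true]) := by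
      ext x
      simp only [Finset.mem_filter, Finset.mem_union, Finset.mem_image]
      constructor
      · rintro ⟨hxP, hxl, hxle⟩
        obtain ⟨y, hy, b, rfl⟩ := (hchild x).mp ⟨hxP, by simpa using hxl⟩
        rw [rev_concat, rev_concat] at hxle
        cases b
        · exact Or.inl ⟨y, hy, rfl⟩
        · refine Or.inr ⟨y, ?_, rfl⟩
          rw [hRdef, Finset.mem_filter]
          exact ⟨hy, lexLE_cons_inv hxle⟩
      · intro hx
        have hx' : ∃ y ∈ I, ∃ b : Bool, x = y ++ [b] := by
          rcases hx with ⟨y, hy, rfl⟩ | ⟨y, hy, rfl⟩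
          · exact ⟨y, hy, false, rfl⟩
          · rw [hRdef, Finset.mem_filter] at hy
            exact ⟨y, hy.1, true, rfl⟩
        obtain ⟨hmem1, hlen1⟩ := (hchild x).mpr hx'
        refine ⟨hmem1, by simp [hlen1], ?_⟩
        rcases hx with ⟨y, hy, rfl⟩ | ⟨y, hy, rfl⟩
        · rw [rev_concat, rev_concat]
          exact Or.inl (lexLT_false_true _ _)
        · rw [hRdef, Finset.mem_filter] at hy
          rw [rev_concat, rev_concat]
          exact lexLE_cons hy.2
    have hdisj : Disjoint (I.image (fun y => y ++ [false])) (R.image (fun y => y ++ [true])) := by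
      rw [Finset.disjoint_left]
      intro x h1 h2
      rw [Finset.mem_image] at h1 h2
      obtain ⟨y1, hy1, heq1⟩ := h1
      obtain ⟨y2, hy2, heq2⟩ := h2
      rw [← heq2] at heq1
      have := congrArg List.getLast? heq1
      simp at this
    rw [hun, Finset.card_union_of_disjoint hdisj,
      Finset.card_image_of_injective _ (hinj false),
      Finset.card_image_of_injective _ (hinj true)]
  -- G1
  have hG1 : (P.filter (fun x => x.length = u.length ∧ lexLE x.reverse u.reverse)).card
      = leaves C u.length + R.card := by
    have hun : P.filter (fun x => x.length = u.length ∧ lexLE x.reverse u.reverse)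
        = (C.filter (fun w => w.length = u.length)) ∪ R := by
      ext x
      simp only [Finset.mem_filter, Finset.mem_union]
      constructor
      · rintro ⟨hxP, hxl, hxle⟩
        by_cases hxC : x ∈ C
        · exact Or.inl ⟨hxC, hxl⟩
        · refine Or.inr ?_
          rw [hRdef, Finset.mem_filter, hIdef, Finset.mem_filter]
          exact ⟨⟨hxP, hxl, hxC⟩, hxle⟩
      · rintro (⟨hxC, hxl⟩ | hxR)
        · exact ⟨(hmemP x).mpr ⟨x, hxC, List.prefix_refl x⟩, hxl, Or.inl (hLF x hxC hxl)⟩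
        · rw [hRdef, Finset.mem_filter, hIdef, Finset.mem_filter] at hxR
          exact ⟨hxR.1.1, hxR.1.2.1, hxR.2⟩
    have hdisj : Disjoint (C.filter (fun w => w.length = u.length)) R := by
      rw [Finset.disjoint_left]
      intro x hx1 hx2
      rw [hRdef, Finset.mem_filter, hIdef, Finset.mem_filter] at hx2
      exact hx2.1.2.2 (Finset.mem_filter.mp hx1).1
    rw [hun, Finset.card_union_of_disjoint hdisj, leaves]
  -- assemble
  have e0 : rankRev C u = leaves C u.length + R.card := by rw [hrank u]; exact hG1
  have e1 : rankRev C (u ++ [false]) = R.card := by rw [hrank]; exact hG2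
  have e2 : rankRev C (u ++ [true]) = I.card + R.card := by rw [hrank]; exact hG3
  have e3 : nodes C (u.length + 1) = 2 * I.card := by rw [hnodes]; exact hG4
  constructor
  · rw [e0, e1]
    push_cast
    ring
  · rw [e0, e2, e3]
    push_cast
    ring
end
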